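/- arXiv:math-ph/0609022 — 8 statements merged into one kernel-verified Lean document; each statement's English description precedes it below -/
import Mathlib

section
/- Let x_1, …, x_m be pairwise distinct complex numbers and let S_q = Σ_{α=1}^m x_α^q denote their power sums (with S_0 = m). Then for every integer p ≥ 1: Σ_{α=1}^m Σ_{β≠α} x_α^p/(x_β − x_α) = (1/2)·( p·S_{p−1} − Σ_{i=0}^{p−1} S_i·S_{p−1−i} ). -/
open Finset

/-- For pairwise distinct complex numbers `x 1, …, x m` with power sums
`S q = Σ_α (x α)^q` (so `S 0 = m`), for every integer `p ≥ 1`: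
`Σ_α Σ_{β ≠ α} (x α)^p / (x β - x α) = (1/2)·(p·S (p-1) - Σ_{i=0}^{p-1} S i · S (p-1-i))`. -/
theorem stmt_0 (m : ℕ) (x : Fin m → ℂ) (hx : Function.Injective x)
    (S : ℕ → ℂ) (hS : ∀ q, S q = ∑ α, x α ^ q)
    (p : ℕ) (hp : 1 ≤ p) :
    ∑ α, ∑ β ∈ univ.erase α, x α ^ p / (x β - x α)
      = (1 / 2) * ((p : ℂ) * S (p - 1) - ∑ i ∈ range p, S i * S (p - 1 - i)) := by
  have hx' : ∀ α β : Fin m, α ≠ β → x β - x α ≠ 0 := fun α β h =>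
    sub_ne_zero.mpr (fun e => h (hx e).symm)
  set L := ∑ α, ∑ β ∈ univ.erase α, x α ^ p / (x β - x α) with hL
  have key : ∀ α β : Fin m, α ≠ β →
      x α ^ p / (x β - x α) + x β ^ p / (x α - x β)
        = -∑ i ∈ range p, x α ^ i * x β ^ (p - 1 - i) := by
    intro α β h
    have h1 : x β - x α ≠ 0 := hx' α β h
    have h2 : x α - x β ≠ 0 := hx' β α h.symm
    have hg := geom_sum₂_mul (x α) (x β) p
    rw [div_add_div _ _ h1 h2, div_eq_iff (mul_ne_zero h1 h2)]
    linear_combination (x β - x α) * hg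
  have swap : L = ∑ α, ∑ β ∈ univ.erase α, x β ^ p / (x α - x β) := by
    rw [hL, Finset.sum_comm' (t' := univ) (s' := fun b => univ.erase b)
      (by intro a b; simp [Finset.mem_erase]; tauto)]
  have h2T : 2 * L = (p : ℂ) * S (p - 1) - ∑ i ∈ range p, S i * S (p - 1 - i) := by
    have e1 : 2 * L = ∑ α, ∑ β ∈ univ.erase α,
        (x α ^ p / (x β - x α) + x β ^ p / (x α - x β)) := by
      rw [two_mul]
      nth_rewrite 2 [swap]
      rw [← Finset.sum_add_distrib]
      exact Finset.sum_congr rfl fun α _ => (Finset.sum_add_distrib).symm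
    rw [e1]
    have e2 : ∀ α : Fin m, ∑ β ∈ univ.erase α,
        (x α ^ p / (x β - x α) + x β ^ p / (x α - x β))
        = -∑ β ∈ univ.erase α, ∑ i ∈ range p, x α ^ i * x β ^ (p - 1 - i) := by
      intro α
      rw [← Finset.sum_neg_distrib]
      exact Finset.sum_congr rfl fun β hβ => key α β (Finset.ne_of_mem_erase hβ).symm
    rw [Finset.sum_congr rfl fun α _ => e2 α]
    have ediag : ∀ α : Fin m, ∑ i ∈ range p, x α ^ i * x α ^ (p - 1 - i)
        = (p : ℂ) * x α ^ (p - 1) := by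
      intro α
      rw [Finset.sum_congr rfl (fun i hi => ?_), Finset.sum_const, Finset.card_range,
        nsmul_eq_mul]
      rw [← pow_add]
      congr 1
      have := Finset.mem_range.mp hi
      omega
    have efull : ∑ α : Fin m, ∑ β : Fin m, ∑ i ∈ range p, x α ^ i * x β ^ (p - 1 - i)
        = ∑ i ∈ range p, S i * S (p - 1 - i) := by
      rw [Finset.sum_comm]
      rw [Finset.sum_congr rfl fun β _ => Finset.sum_comm]
      rw [Finset.sum_comm]
      refine Finset.sum_congr rfl fun i _ => ?_
      rw [hS, hS, Finset.sum_mul_sum]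
      exact Finset.sum_comm
    have esplit : ∀ α : Fin m, ∑ β ∈ univ.erase α, ∑ i ∈ range p, x α ^ i * x β ^ (p - 1 - i)
        = (∑ β : Fin m, ∑ i ∈ range p, x α ^ i * x β ^ (p - 1 - i))
          - (p : ℂ) * x α ^ (p - 1) := by
      intro α
      rw [← ediag α, Finset.sum_erase_eq_sub (Finset.mem_univ α)]
    rw [Finset.sum_congr rfl fun α _ => congrArg Neg.neg (esplit α)]
    rw [Finset.sum_neg_distrib, Finset.sum_sub_distrib, efull, ← Finset.mul_sum, ← hS]
    ring
  linear_combination h2T / 2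
end

section
/- If e_1, …, e_M satisfy the Richardson equations at coupling g, then for every integer p ≥ 1 the transformed cluster equation holds: S_p − 4g·d_k·S_{p−1} + 2g·p·S_{p−1} − 2g·Σ_{i=0}^{p−1} S_{p−i−1}·S_i − 4g·Σ_{j≠k} d_j·Σ_{α∈C} x_α^p/(2η_j − e_α) + 4g·Σ_{β∉C} Σ_{α∈C} x_α^p/(e_α − e_β) = 0. -/
open Finset

/-- If `e 1, …, e M` satisfy the Richardson equations at coupling `g`, then for every
integer `p ≥ 1` the transformed cluster equation holds. -/
theorem stmt_1
    (M L : ℕ) (hM : 1 ≤ M) (hL : 1 ≤ L)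
    (η : Fin L → ℝ) (hη : Function.Injective η) (d : Fin L → ℝ)
    (g : ℝ) (e : Fin M → ℂ)
    (he : Function.Injective e)
    (hed : ∀ α j, e α ≠ 2 * (η j : ℂ))
    (hrich : ∀ α, (1 : ℂ) - 4 * g * ∑ j, (d j : ℂ) / (2 * (η j : ℂ) - e α)
        + 4 * g * ∑ β ∈ univ.erase α, 1 / (e α - e β) = 0)
    (k : Fin L) (C : Finset (Fin M)) (Mk : ℕ) (hMk : C.card = Mk) (hMk1 : 1 ≤ Mk)
    (S : ℕ → ℂ) (hS : ∀ q, S q = ∑ α ∈ C, (2 * (η k : ℂ) - e α) ^ q)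
    (p : ℕ) (hp : 1 ≤ p) :
    S p - 4 * g * (d k : ℂ) * S (p - 1) + 2 * g * (p : ℂ) * S (p - 1)
      - 2 * g * ∑ i ∈ range p, S (p - 1 - i) * S i
      - 4 * g * ∑ j ∈ univ.erase k, (d j : ℂ) *
          ∑ α ∈ C, (2 * (η k : ℂ) - e α) ^ p / (2 * (η j : ℂ) - e α)
      + 4 * g * ∑ β ∈ Cᶜ, ∑ α ∈ C, (2 * (η k : ℂ) - e α) ^ p / (e α - e β) = 0 := by
  have hx0 : ∀ α, (2 * (η k : ℂ) - e α) ≠ 0 := fun α => sub_ne_zero.mpr (Ne.symm (hed α k))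
  have hpow : ∀ α : Fin M, (2 * (η k : ℂ) - e α) ^ p
      = (2 * (η k : ℂ) - e α) ^ (p - 1) * (2 * (η k : ℂ) - e α) := by
    intro α
    rw [← pow_succ]
    congr 1
    omega
  -- the key summed Richardson equation
  have key : ∑ α ∈ C, ((2 * (η k : ℂ) - e α) ^ p
      - 4 * g * ∑ j, (d j : ℂ) * ((2 * (η k : ℂ) - e α) ^ p / (2 * (η j : ℂ) - e α))
      + 4 * g * ∑ β ∈ univ.erase α, (2 * (η k : ℂ) - e α) ^ p / (e α - e β)) = 0 := by
    apply Finset.sum_eq_zero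
    intro α hα
    have inner1 : (2 * (η k : ℂ) - e α) ^ p * ∑ j, (d j : ℂ) / (2 * (η j : ℂ) - e α)
        = ∑ j, (d j : ℂ) * ((2 * (η k : ℂ) - e α) ^ p / (2 * (η j : ℂ) - e α)) := by
      rw [Finset.mul_sum]
      exact Finset.sum_congr rfl fun j _ => by ring
    have inner2 : (2 * (η k : ℂ) - e α) ^ p * ∑ β ∈ univ.erase α, 1 / (e α - e β)
        = ∑ β ∈ univ.erase α, (2 * (η k : ℂ) - e α) ^ p / (e α - e β) := by
      rw [Finset.mul_sum]
      exact Finset.sum_congr rfl fun β _ => by ring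
    rw [← inner1, ← inner2]
    linear_combination (2 * (η k : ℂ) - e α) ^ p * hrich α
  -- piece e2 : middle double sum
  have e2 : ∑ α ∈ C, ∑ j, (d j : ℂ) * ((2 * (η k : ℂ) - e α) ^ p / (2 * (η j : ℂ) - e α))
      = (d k : ℂ) * S (p - 1)
        + ∑ j ∈ univ.erase k, (d j : ℂ) *
            ∑ α ∈ C, (2 * (η k : ℂ) - e α) ^ p / (2 * (η j : ℂ) - e α) := by
    rw [Finset.sum_comm, ← Finset.add_sum_erase _ _ (Finset.mem_univ k)]
    congr 1
    · rw [hS, ← Finset.mul_sum]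
      congr 1
      refine Finset.sum_congr rfl fun α _ => ?_
      rw [hpow α, mul_div_cancel_right₀ _ (hx0 α)]
    · exact Finset.sum_congr rfl fun j _ => (Finset.mul_sum _ _ _).symm
  -- piece e3 : last double sum
  have e3 : ∑ α ∈ C, ∑ β ∈ univ.erase α, (2 * (η k : ℂ) - e α) ^ p / (e α - e β)
      = (∑ α ∈ C, ∑ β ∈ C, (2 * (η k : ℂ) - e α) ^ p / (e α - e β))
        + ∑ β ∈ Cᶜ, ∑ α ∈ C, (2 * (η k : ℂ) - e α) ^ p / (e α - e β) := by
    have h1 : ∀ α ∈ C, ∑ β ∈ univ.erase α, (2 * (η k : ℂ) - e α) ^ p / (e α - e β)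
        = ∑ β ∈ C, (2 * (η k : ℂ) - e α) ^ p / (e α - e β)
          + ∑ β ∈ Cᶜ, (2 * (η k : ℂ) - e α) ^ p / (e α - e β) := by
      intro α hα
      rw [Finset.sum_erase _ (by rw [sub_self, div_zero]),
        ← Finset.sum_add_sum_compl C (fun β => (2 * (η k : ℂ) - e α) ^ p / (e α - e β))]
    rw [Finset.sum_congr rfl h1, Finset.sum_add_distrib]
    congr 1
    exact Finset.sum_comm
  -- the symmetrization identity
  have hT : 2 * (∑ α ∈ C, ∑ β ∈ C, (2 * (η k : ℂ) - e α) ^ p / (e α - e β))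
      = (p : ℂ) * S (p - 1) - ∑ i ∈ range p, S (p - 1 - i) * S i := by
    have hswap : (∑ α ∈ C, ∑ β ∈ C, (2 * (η k : ℂ) - e α) ^ p / (e α - e β))
        = ∑ α ∈ C, ∑ β ∈ C, (2 * (η k : ℂ) - e β) ^ p / (e β - e α) := Finset.sum_comm
    have h2T : 2 * (∑ α ∈ C, ∑ β ∈ C, (2 * (η k : ℂ) - e α) ^ p / (e α - e β))
        = ∑ α ∈ C, ∑ β ∈ C, ((2 * (η k : ℂ) - e α) ^ p / (e α - e β)
            + (2 * (η k : ℂ) - e β) ^ p / (e β - e α)) := by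
      rw [two_mul]
      nth_rewrite 2 [hswap]
      rw [← Finset.sum_add_distrib]
      exact Finset.sum_congr rfl fun α _ => (Finset.sum_add_distrib).symm
    have hpoint : ∀ α ∈ C, ∀ β ∈ C,
        (2 * (η k : ℂ) - e α) ^ p / (e α - e β) + (2 * (η k : ℂ) - e β) ^ p / (e β - e α)
          + ∑ i ∈ range p, (2 * (η k : ℂ) - e α) ^ i * (2 * (η k : ℂ) - e β) ^ (p - 1 - i)
        = if α = β then (p : ℂ) * (2 * (η k : ℂ) - e α) ^ (p - 1) else 0 := by
      intro α _ β _
      by_cases hab : α = β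
      · subst hab
        rw [if_pos rfl]
        simp only [sub_self, div_zero, zero_add]
        have : ∀ i ∈ range p, (2 * (η k : ℂ) - e α) ^ i * (2 * (η k : ℂ) - e α) ^ (p - 1 - i)
            = (2 * (η k : ℂ) - e α) ^ (p - 1) := by
          intro i hi
          rw [← pow_add]
          congr 1
          have := Finset.mem_range.mp hi
          omega
        rw [Finset.sum_congr rfl this, Finset.sum_const, Finset.card_range, nsmul_eq_mul]
      · rw [if_neg hab]
        have hne : e α - e β ≠ 0 := sub_ne_zero.mpr (fun h => hab (he h))
        have hne' : e β - e α ≠ 0 := sub_ne_zero.mpr (fun h => hab (he h.symm))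
        have hg := geom_sum₂_mul (2 * (η k : ℂ) - e α) (2 * (η k : ℂ) - e β) p
        have hGeq : (∑ i ∈ range p, (2 * (η k : ℂ) - e α) ^ i * (2 * (η k : ℂ) - e β) ^ (p - 1 - i))
            = ((2 * (η k : ℂ) - e β) ^ p - (2 * (η k : ℂ) - e α) ^ p) / (e α - e β) := by
          rw [eq_div_iff hne]
          linear_combination -hg
        rw [hGeq]
        field_simp
        ring
    have hG : ∑ α ∈ C, ∑ β ∈ C,
        (∑ i ∈ range p, (2 * (η k : ℂ) - e α) ^ i * (2 * (η k : ℂ) - e β) ^ (p - 1 - i))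
        = ∑ i ∈ range p, S (p - 1 - i) * S i := by
      rw [Finset.sum_congr rfl (fun α _ => Finset.sum_comm), Finset.sum_comm]
      refine Finset.sum_congr rfl fun i _ => ?_
      calc ∑ α ∈ C, ∑ β ∈ C,
            (2 * (η k : ℂ) - e α) ^ i * (2 * (η k : ℂ) - e β) ^ (p - 1 - i)
          = (∑ α ∈ C, (2 * (η k : ℂ) - e α) ^ i)
              * (∑ β ∈ C, (2 * (η k : ℂ) - e β) ^ (p - 1 - i)) :=
            (Finset.sum_mul_sum C C _ _).symm
        _ = S (p - 1 - i) * S i := by rw [← hS, ← hS, mul_comm]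
    have hIte : ∑ α ∈ C, ∑ β ∈ C,
        (if α = β then (p : ℂ) * (2 * (η k : ℂ) - e α) ^ (p - 1) else 0)
        = (p : ℂ) * S (p - 1) := by
      have h1 : ∀ α ∈ C, ∑ β ∈ C, (if α = β then (p : ℂ) * (2 * (η k : ℂ) - e α) ^ (p - 1) else 0)
          = (p : ℂ) * (2 * (η k : ℂ) - e α) ^ (p - 1) := by
        intro α hα
        rw [Finset.sum_ite_eq, if_pos hα]
      rw [Finset.sum_congr rfl h1, ← Finset.mul_sum, hS]
    have hsum : 2 * (∑ α ∈ C, ∑ β ∈ C, (2 * (η k : ℂ) - e α) ^ p / (e α - e β))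
        + ∑ i ∈ range p, S (p - 1 - i) * S i = (p : ℂ) * S (p - 1) := by
      rw [h2T, ← hG, ← hIte, ← Finset.sum_add_distrib]
      refine Finset.sum_congr rfl fun α hα => ?_
      rw [← Finset.sum_add_distrib]
      exact Finset.sum_congr rfl fun β hβ => hpoint α hα β hβ
    linear_combination hsum
  -- assemble
  have hkey : S p - 4 * g * ((d k : ℂ) * S (p - 1)
        + ∑ j ∈ univ.erase k, (d j : ℂ) *
            ∑ α ∈ C, (2 * (η k : ℂ) - e α) ^ p / (2 * (η j : ℂ) - e α))
      + 4 * g * ((∑ α ∈ C, ∑ β ∈ C, (2 * (η k : ℂ) - e α) ^ p / (e α - e β))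
        + ∑ β ∈ Cᶜ, ∑ α ∈ C, (2 * (η k : ℂ) - e α) ^ p / (e α - e β)) = 0 := by
    rw [← e2, ← e3, hS, Finset.mul_sum, Finset.mul_sum, ← Finset.sum_sub_distrib,
      ← Finset.sum_add_distrib]
    exact key
  linear_combination hkey - 2 * (g : ℂ) * hT
end

section
/- Suppose e_1, …, e_M satisfy the Richardson equations at coupling g and that max_{α∈C} |x_α| < |2η_k − 2η_j| for all j ≠ k and max_{α∈C} |x_α| < |2η_k − e_β| for all β ∉ C. Then the series Σ_{n=0}^∞ S_{1+n}·P_n converges absolutely and S_1 − 4g·d_k·M_k − 2g·(M_k² − M_k) + 4g·Σ_{n=0}^∞ S_{1+n}·P_n = 0. -/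
open Finset



lemma geomSummableNorm (x c : ℂ) (h : ‖x‖ < ‖c‖) :
    Summable (fun n : ℕ => ‖(x / c) ^ (n + 1)‖) := by
  have hxc : ‖x / c‖ < 1 := by
    rw [norm_div]
    exact (div_lt_one (lt_of_le_of_lt (norm_nonneg x) h)).2 h
  have h1 := (summable_geometric_of_lt_one (norm_nonneg (x / c)) hxc).mul_left ‖x / c‖
  simpa [← pow_succ'] using h1

lemma geomTsum (x c : ℂ) (h : ‖x‖ < ‖c‖) :
    ∑' n : ℕ, (x / c) ^ (n + 1) = x / (c - x) := by
  have hc : c ≠ 0 := by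
    intro h0
    rw [h0, norm_zero] at h
    exact absurd h (norm_nonneg x).not_gt
  have hcx : c - x ≠ 0 := by
    intro h0
    have : c = x := by linear_combination h0
    rw [this] at h; exact lt_irrefl _ h
  have hxc : ‖x / c‖ < 1 := by
    rw [norm_div]
    exact (div_lt_one (lt_of_le_of_lt (norm_nonneg x) h)).2 h
  calc ∑' n : ℕ, (x / c) ^ (n + 1) = ∑' n : ℕ, (x / c) * (x / c) ^ n := by
        simp [← pow_succ']
    _ = (x / c) * (1 - x / c)⁻¹ := by
        rw [tsum_mul_left, tsum_geometric_of_norm_lt_one hxc]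
    _ = x / (c - x) := by
        field_simp

lemma keyLemma {A B : Type*} (sA : Finset A) (sB : Finset B)
    (x : A → ℂ) (w : B → ℂ) (c : B → ℂ)
    (h : ∀ α ∈ sA, ∀ β ∈ sB, ‖x α‖ < ‖c β‖) :
    (Summable fun n : ℕ =>
        ‖(∑ α ∈ sA, x α ^ (1 + n)) * (∑ β ∈ sB, w β / c β ^ (n + 1))‖) ∧
    ∑' n : ℕ, (∑ α ∈ sA, x α ^ (1 + n)) * (∑ β ∈ sB, w β / c β ^ (n + 1))
      = ∑ α ∈ sA, ∑ β ∈ sB, w β * x α / (c β - x α) := by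
  have hrep : ∀ n : ℕ, (∑ α ∈ sA, x α ^ (1 + n)) * (∑ β ∈ sB, w β / c β ^ (n + 1))
      = ∑ α ∈ sA, ∑ β ∈ sB, w β * (x α / c β) ^ (n + 1) := by
    intro n
    rw [sum_mul]
    refine sum_congr rfl fun α hα => ?_
    rw [mul_sum]
    refine sum_congr rfl fun β hβ => ?_
    rw [div_pow]
    ring
  have hnorm : ∀ α ∈ sA, ∀ β ∈ sB,
      Summable (fun n : ℕ => ‖w β * (x α / c β) ^ (n + 1)‖) := by
    intro α hα β hβ
    simp only [norm_mul]
    exact (geomSummableNorm _ _ (h α hα β hβ)).mul_left _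
  have hinner : ∀ α ∈ sA, ∀ β ∈ sB,
      Summable (fun n : ℕ => w β * (x α / c β) ^ (n + 1)) :=
    fun α hα β hβ => (hnorm α hα β hβ).of_norm
  have hsumin : ∀ α ∈ sA,
      Summable (fun n : ℕ => ∑ β ∈ sB, w β * (x α / c β) ^ (n + 1)) :=
    fun α hα => (hasSum_sum fun β hβ => (hinner α hα β hβ).hasSum).summable
  constructor
  · have hbnd : Summable (fun n : ℕ =>
        ∑ α ∈ sA, ∑ β ∈ sB, ‖w β * (x α / c β) ^ (n + 1)‖) :=
      (hasSum_sum fun α hα =>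
        ((hasSum_sum fun β hβ => (hnorm α hα β hβ).hasSum)).summable.hasSum).summable
    refine Summable.of_nonneg_of_le (fun n => norm_nonneg _) (fun n => ?_) hbnd
    rw [hrep n]
    exact (norm_sum_le _ _).trans (sum_le_sum fun α hα => norm_sum_le _ _)
  · calc ∑' n : ℕ, (∑ α ∈ sA, x α ^ (1 + n)) * (∑ β ∈ sB, w β / c β ^ (n + 1))
        = ∑' n : ℕ, ∑ α ∈ sA, ∑ β ∈ sB, w β * (x α / c β) ^ (n + 1) :=
          tsum_congr hrep
      _ = ∑ α ∈ sA, ∑' n : ℕ, ∑ β ∈ sB, w β * (x α / c β) ^ (n + 1) :=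
          Summable.tsum_finsetSum hsumin
      _ = ∑ α ∈ sA, ∑ β ∈ sB, ∑' n : ℕ, w β * (x α / c β) ^ (n + 1) :=
          sum_congr rfl fun α hα => Summable.tsum_finsetSum (hinner α hα)
      _ = ∑ α ∈ sA, ∑ β ∈ sB, w β * x α / (c β - x α) := by
          refine sum_congr rfl fun α hα => sum_congr rfl fun β hβ => ?_
          rw [tsum_mul_left, geomTsum _ _ (h α hα β hβ), mul_div_assoc]



/-- If the Richardson equations hold at coupling `g` and `max_{α∈C} |x α|` is smaller
than `|2η k - 2η j|` for all `j ≠ k` and than `|2η k - e β|` for all `β ∉ C`, then the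
series `Σ_n S (1+n) · P n` converges absolutely and
`S 1 - 4g·d k·Mk - 2g·(Mk² - Mk) + 4g·Σ_n S (1+n)·P n = 0`. -/
theorem stmt_4
    (M L : ℕ) (hM : 1 ≤ M) (hL : 1 ≤ L)
    (η : Fin L → ℝ) (hη : Function.Injective η) (d : Fin L → ℝ)
    (g : ℝ) (e : Fin M → ℂ)
    (he : Function.Injective e)
    (hed : ∀ α j, e α ≠ 2 * (η j : ℂ))
    (hrich : ∀ α, (1 : ℂ) - 4 * g * ∑ j, (d j : ℂ) / (2 * (η j : ℂ) - e α)
        + 4 * g * ∑ β ∈ univ.erase α, 1 / (e α - e β) = 0)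
    (k : Fin L) (C : Finset (Fin M)) (Mk : ℕ) (hMk : C.card = Mk) (hMk1 : 1 ≤ Mk)
    (hCne : C.Nonempty)
    (S : ℕ → ℂ) (hS : ∀ q, S q = ∑ α ∈ C, (2 * (η k : ℂ) - e α) ^ q)
    (P : ℕ → ℂ)
    (hP : ∀ n, P n = ∑ j ∈ univ.erase k, (d j : ℂ) / (2 * (η k : ℂ) - 2 * (η j : ℂ)) ^ (n + 1)
        + ∑ β ∈ Cᶜ, 1 / (2 * (η k : ℂ) - e β) ^ (n + 1))
    (hmaxη : ∀ j, j ≠ k →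
      (C.sup' hCne fun α => ‖2 * (η k : ℂ) - e α‖) < ‖2 * (η k : ℂ) - 2 * (η j : ℂ)‖)
    (hmaxe : ∀ β, β ∉ C →
      (C.sup' hCne fun α => ‖2 * (η k : ℂ) - e α‖) < ‖2 * (η k : ℂ) - e β‖) :
    (Summable fun n : ℕ => ‖S (1 + n) * P n‖) ∧
      S 1 - 4 * g * (d k : ℂ) * (Mk : ℂ) - 2 * g * ((Mk : ℂ) ^ 2 - (Mk : ℂ))
        + 4 * g * ∑' n : ℕ, S (1 + n) * P n = 0 := by
  classical
  have hx0 : ∀ α, (2 * (η k : ℂ) - e α) ≠ 0 := fun α => sub_ne_zero.2 (hed α k).symm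
  -- setup for keyLemma
  set sB : Finset (Fin L ⊕ Fin M) := (univ.erase k).disjSum Cᶜ with hsB
  set w : Fin L ⊕ Fin M → ℂ := Sum.elim (fun j => (d j : ℂ)) (fun _ => (1 : ℂ)) with hw
  set c : Fin L ⊕ Fin M → ℂ :=
    Sum.elim (fun j => 2 * (η k : ℂ) - 2 * (η j : ℂ)) (fun β => 2 * (η k : ℂ) - e β) with hc
  have hlt : ∀ α ∈ C, ∀ β ∈ sB, ‖2 * (η k : ℂ) - e α‖ < ‖c β‖ := by
    intro α hα β hβ
    have hr : ‖2 * (η k : ℂ) - e α‖ ≤ C.sup' hCne fun α => ‖2 * (η k : ℂ) - e α‖ :=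
      le_sup' (fun α => ‖2 * (η k : ℂ) - e α‖) hα
    rcases Finset.mem_disjSum.1 hβ with ⟨j, hj, rfl⟩ | ⟨m, hm, rfl⟩
    · exact hr.trans_lt (hmaxη j (mem_erase.1 hj).1)
    · exact hr.trans_lt (hmaxe m (mem_compl.1 hm))
  obtain ⟨hsummable', htsum'⟩ :=
    keyLemma C sB (fun α => 2 * (η k : ℂ) - e α) w c hlt
  have hfun : ∀ n : ℕ, S (1 + n) * P n
      = (∑ α ∈ C, (2 * (η k : ℂ) - e α) ^ (1 + n)) * (∑ β ∈ sB, w β / c β ^ (n + 1)) := by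
    intro n
    rw [hS, hP, hsB, Finset.sum_disjSum]
    simp only [hw, hc, Sum.elim_inl, Sum.elim_inr]
  refine ⟨hsummable'.congr fun n => congrArg Norm.norm (hfun n).symm, ?_⟩
  -- the tsum
  have hT : ∑' n : ℕ, S (1 + n) * P n
      = ∑ α ∈ C, ∑ β ∈ sB, w β * (2 * (η k : ℂ) - e α) / (c β - (2 * (η k : ℂ) - e α)) := by
    rw [tsum_congr hfun]; exact htsum'
  have hT2 : ∑' n : ℕ, S (1 + n) * P n
      = -(∑ α ∈ C, ∑ j ∈ univ.erase k,
            (d j : ℂ) * (2 * (η k : ℂ) - e α) / (2 * (η j : ℂ) - e α))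
        + ∑ α ∈ C, ∑ β ∈ Cᶜ, (2 * (η k : ℂ) - e α) / (e α - e β) := by
    rw [hT, ← sum_neg_distrib, ← sum_add_distrib]
    refine sum_congr rfl fun α hα => ?_
    rw [hsB, Finset.sum_disjSum, ← sum_neg_distrib]
    congr 1
    · refine sum_congr rfl fun j hj => ?_
      simp only [hw, hc, Sum.elim_inl]
      have hden : (2 * (η k : ℂ) - 2 * (η j : ℂ)) - (2 * (η k : ℂ) - e α)
          = -(2 * (η j : ℂ) - e α) := by ring
      rw [hden, div_neg]
    · refine sum_congr rfl fun m hm => ?_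
      simp only [hw, hc, Sum.elim_inr, one_mul]
      have hden : (2 * (η k : ℂ) - e m) - (2 * (η k : ℂ) - e α) = e α - e m := by ring
      rw [hden]
  -- Richardson equations multiplied by x α and summed over C
  have hRich : ∀ α ∈ C,
      (2 * (η k : ℂ) - e α)
        - 4 * g * ∑ j, (d j : ℂ) * (2 * (η k : ℂ) - e α) / (2 * (η j : ℂ) - e α)
        + 4 * g * ∑ β ∈ univ.erase α, (2 * (η k : ℂ) - e α) / (e α - e β) = 0 := by
    intro α _
    have h0 := hrich α
    have h1 : ∑ j, (d j : ℂ) * (2 * (η k : ℂ) - e α) / (2 * (η j : ℂ) - e α)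
        = (2 * (η k : ℂ) - e α) * ∑ j, (d j : ℂ) / (2 * (η j : ℂ) - e α) := by
      rw [mul_sum]; exact sum_congr rfl fun j _ => by ring
    have h2 : ∑ β ∈ univ.erase α, (2 * (η k : ℂ) - e α) / (e α - e β)
        = (2 * (η k : ℂ) - e α) * ∑ β ∈ univ.erase α, 1 / (e α - e β) := by
      rw [mul_sum]; exact sum_congr rfl fun β _ => by ring
    rw [h1, h2]
    linear_combination (2 * (η k : ℂ) - e α) * h0
  have hRsum : (∑ α ∈ C, (2 * (η k : ℂ) - e α))
      - 4 * g * ∑ α ∈ C, ∑ j, (d j : ℂ) * (2 * (η k : ℂ) - e α) / (2 * (η j : ℂ) - e α)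
      + 4 * g * ∑ α ∈ C, ∑ β ∈ univ.erase α, (2 * (η k : ℂ) - e α) / (e α - e β) = 0 := by
    have h0 := Finset.sum_eq_zero hRich
    rwa [sum_add_distrib, sum_sub_distrib, ← mul_sum, ← mul_sum] at h0
  -- split off the j = k term
  have hsplitj : ∑ α ∈ C, ∑ j, (d j : ℂ) * (2 * (η k : ℂ) - e α) / (2 * (η j : ℂ) - e α)
      = (Mk : ℂ) * (d k : ℂ)
        + ∑ α ∈ C, ∑ j ∈ univ.erase k,
            (d j : ℂ) * (2 * (η k : ℂ) - e α) / (2 * (η j : ℂ) - e α) := by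
    have h1 : ∀ α ∈ C, ∑ j, (d j : ℂ) * (2 * (η k : ℂ) - e α) / (2 * (η j : ℂ) - e α)
        = (d k : ℂ) + ∑ j ∈ univ.erase k,
            (d j : ℂ) * (2 * (η k : ℂ) - e α) / (2 * (η j : ℂ) - e α) := by
      intro α _
      rw [← Finset.add_sum_erase univ _ (mem_univ k)]
      congr 1
      rw [mul_div_assoc, div_self (hx0 α), mul_one]
    rw [sum_congr rfl h1, sum_add_distrib, sum_const, hMk, nsmul_eq_mul]
  -- split the β-sum into β ∈ C.erase α and β ∈ Cᶜ
  have hsplitβ : ∑ α ∈ C, ∑ β ∈ univ.erase α, (2 * (η k : ℂ) - e α) / (e α - e β)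
      = ∑ α ∈ C, ∑ β ∈ C.erase α, (2 * (η k : ℂ) - e α) / (e α - e β)
        + ∑ α ∈ C, ∑ β ∈ Cᶜ, (2 * (η k : ℂ) - e α) / (e α - e β) := by
    rw [← sum_add_distrib]
    refine sum_congr rfl fun α hα => ?_
    have huniv : univ.erase α = C.erase α ∪ Cᶜ := by
      ext γ
      simp only [mem_erase, mem_union, mem_compl, mem_univ, and_true]
      constructor
      · intro hγ
        by_cases hcγ : γ ∈ C
        · exact Or.inl ⟨hγ, hcγ⟩
        · exact Or.inr hcγ
      · rintro (⟨h1, _⟩ | h1)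
        · exact h1
        · exact fun hh => h1 (hh ▸ hα)
    have hdisj : Disjoint (C.erase α) Cᶜ :=
      disjoint_compl_right.mono_left (erase_subset _ _)
    rw [huniv, sum_union hdisj]
  -- the pair identity
  have hD2 : (2 : ℂ) * ∑ α ∈ C, ∑ β ∈ C.erase α, (2 * (η k : ℂ) - e α) / (e α - e β)
      = -((Mk : ℂ) * ((Mk : ℂ) - 1)) := by
    have hswap : ∑ α ∈ C, ∑ β ∈ C.erase α, (2 * (η k : ℂ) - e α) / (e α - e β)
        = ∑ α ∈ C, ∑ β ∈ C.erase α, (2 * (η k : ℂ) - e β) / (e β - e α) :=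
      Finset.sum_comm' (fun a b => by
        simp only [mem_erase]
        constructor
        · rintro ⟨h1, h2, h3⟩; exact ⟨⟨fun hh => h2 hh.symm, h1⟩, h3⟩
        · rintro ⟨⟨h1, h2⟩, h3⟩; exact ⟨h2, fun hh => h1 hh.symm, h3⟩)
    calc (2 : ℂ) * ∑ α ∈ C, ∑ β ∈ C.erase α, (2 * (η k : ℂ) - e α) / (e α - e β)
        = (∑ α ∈ C, ∑ β ∈ C.erase α, (2 * (η k : ℂ) - e α) / (e α - e β))
          + ∑ α ∈ C, ∑ β ∈ C.erase α, (2 * (η k : ℂ) - e β) / (e β - e α) := by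
          rw [← hswap]; ring
      _ = ∑ α ∈ C, ∑ β ∈ C.erase α,
            ((2 * (η k : ℂ) - e α) / (e α - e β) + (2 * (η k : ℂ) - e β) / (e β - e α)) := by
          rw [← sum_add_distrib]
          exact sum_congr rfl fun α _ => sum_add_distrib.symm
      _ = ∑ α ∈ C, ∑ β ∈ C.erase α, (-1 : ℂ) := by
          refine sum_congr rfl fun α hα => sum_congr rfl fun β hβ => ?_
          have hne : e α - e β ≠ 0 :=
            sub_ne_zero.2 fun hEq => (mem_erase.1 hβ).1 (he hEq).symm
          have hne' : e β - e α ≠ 0 :=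
            sub_ne_zero.2 fun hEq => (mem_erase.1 hβ).1 (he hEq)
          field_simp
          ring
      _ = -((Mk : ℂ) * ((Mk : ℂ) - 1)) := by
          have h1 : ∀ α ∈ C, ∑ _β ∈ C.erase α, (-1 : ℂ) = -((Mk : ℂ) - 1) := by
            intro α hα
            rw [sum_const, card_erase_of_mem hα, hMk, nsmul_eq_mul,
              Nat.cast_sub hMk1]
            push_cast
            ring
          rw [sum_congr rfl h1, sum_const, hMk, nsmul_eq_mul]
          ring
  have hS1 : S 1 = ∑ α ∈ C, (2 * (η k : ℂ) - e α) := by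
    rw [hS 1]; exact sum_congr rfl fun α _ => pow_one _
  rw [hsplitj, hsplitβ] at hRsum
  linear_combination hRsum - 2 * (g : ℂ) * hD2 + 4 * (g : ℂ) * hT2 + hS1
end

section
/- Suppose e_1, …, e_M satisfy the Richardson equations at coupling g, that the cluster condition M_k = 1 − 2d_k holds, and that max_{α∈C} |x_α| < |2η_k − 2η_j| for all j ≠ k and max_{α∈C} |x_α| < |2η_k − e_β| for all β ∉ C. Then for every integer p ≥ 2 the series Σ_{n=0}^∞ S_{p+n}·P_n converges absolutely and S_p − 2g·(M_k + 1 − p)·S_{p−1} − 2g·Σ_{i=1}^{p−2} S_{p−i−1}·S_i + 4g·Σ_{n=0}^∞ S_{p+n}·P_n = 0. -/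
open Finset

theorem geo_hasSum_aux (x w : ℂ) (h : ‖x‖ < ‖w‖) (m : ℕ) :
    HasSum (fun n : ℕ => x ^ (m + n) / w ^ (n + 1)) (x ^ m / (w - x)) := by
  have hw0 : w ≠ 0 := by
    rintro rfl
    simp at h
    exact (norm_nonneg x).not_gt h
  have hwx : w - x ≠ 0 := sub_ne_zero.mpr (by rintro rfl; exact lt_irrefl _ h)
  have hr : ‖x / w‖ < 1 := by
    rw [norm_div]
    exact (div_lt_one (norm_pos_iff.mpr hw0)).mpr h
  have h2 := (hasSum_geometric_of_norm_lt_one hr).mul_left (x ^ m / w)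
  have hfun : (fun n : ℕ => x ^ m / w * (x / w) ^ n) = fun n : ℕ => x ^ (m + n) / w ^ (n + 1) := by
    funext n
    rw [div_pow, pow_add, pow_succ]
    ring
  rw [hfun] at h2
  have hval : x ^ m / w * (1 - x / w)⁻¹ = x ^ m / (w - x) := by
    have h1 : (1 : ℂ) - x / w = (w - x) / w := by field_simp
    rw [h1, ← one_div, one_div_div]
    field_simp
  rwa [hval] at h2

/-- If the Richardson equations hold at coupling `g`, the cluster condition
`Mk = 1 - 2·d k` holds, and `max_{α∈C} |x α|` is smaller than `|2η k - 2η j|` for all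
`j ≠ k` and than `|2η k - e β|` for all `β ∉ C`, then for every `p ≥ 2` the series
`Σ_n S (p+n) · P n` converges absolutely and
`S p - 2g·(Mk+1-p)·S (p-1) - 2g·Σ_{i=1}^{p-2} S (p-i-1)·S i + 4g·Σ_n S (p+n)·P n = 0`. -/
theorem stmt_5
    (M L : ℕ) (hM : 1 ≤ M) (hL : 1 ≤ L)
    (η : Fin L → ℝ) (hη : Function.Injective η) (d : Fin L → ℝ)
    (g : ℝ) (e : Fin M → ℂ)
    (he : Function.Injective e)
    (hed : ∀ α j, e α ≠ 2 * (η j : ℂ))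
    (hrich : ∀ α, (1 : ℂ) - 4 * g * ∑ j, (d j : ℂ) / (2 * (η j : ℂ) - e α)
        + 4 * g * ∑ β ∈ univ.erase α, 1 / (e α - e β) = 0)
    (k : Fin L) (C : Finset (Fin M)) (Mk : ℕ) (hMk : C.card = Mk) (hMk1 : 1 ≤ Mk)
    (hCne : C.Nonempty)
    (hcluster : (Mk : ℝ) = 1 - 2 * d k)
    (S : ℕ → ℂ) (hS : ∀ q, S q = ∑ α ∈ C, (2 * (η k : ℂ) - e α) ^ q)
    (P : ℕ → ℂ)
    (hP : ∀ n, P n = ∑ j ∈ univ.erase k, (d j : ℂ) / (2 * (η k : ℂ) - 2 * (η j : ℂ)) ^ (n + 1)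
        + ∑ β ∈ Cᶜ, 1 / (2 * (η k : ℂ) - e β) ^ (n + 1))
    (hmaxη : ∀ j, j ≠ k →
      (C.sup' hCne fun α => ‖2 * (η k : ℂ) - e α‖) < ‖2 * (η k : ℂ) - 2 * (η j : ℂ)‖)
    (hmaxe : ∀ β, β ∉ C →
      (C.sup' hCne fun α => ‖2 * (η k : ℂ) - e α‖) < ‖2 * (η k : ℂ) - e β‖)
    (p : ℕ) (hp : 2 ≤ p) :
    (Summable fun n : ℕ => ‖S (p + n) * P n‖) ∧
      S p - 2 * g * ((Mk : ℂ) + 1 - (p : ℂ)) * S (p - 1)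
        - 2 * g * ∑ i ∈ Icc 1 (p - 2), S (p - i - 1) * S i
        + 4 * g * ∑' n : ℕ, S (p + n) * P n = 0 := by
  obtain ⟨q, rfl⟩ : ∃ q, p = q + 2 := ⟨p - 2, by omega⟩
  -- notation
  have hx0 : ∀ α, (2 * (η k : ℂ) - e α) ≠ 0 := fun α => sub_ne_zero.mpr (Ne.symm (hed α k))
  have hxlt : ∀ α ∈ C, ∀ j, j ≠ k →
      ‖2 * (η k : ℂ) - e α‖ < ‖2 * (η k : ℂ) - 2 * (η j : ℂ)‖ := fun α hα j hj =>
    lt_of_le_of_lt (Finset.le_sup' (fun α => ‖2 * (η k : ℂ) - e α‖) hα) (hmaxη j hj)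
  have hxlt' : ∀ α ∈ C, ∀ β, β ∉ C →
      ‖2 * (η k : ℂ) - e α‖ < ‖2 * (η k : ℂ) - e β‖ := fun α hα β hβ =>
    lt_of_le_of_lt (Finset.le_sup' (fun α => ‖2 * (η k : ℂ) - e α‖) hα) (hmaxe β hβ)
  -- per-α HasSum
  have hhas : ∀ α ∈ C, HasSum (fun n : ℕ => (2 * (η k : ℂ) - e α) ^ (q + 2 + n) * P n)
      ((∑ j ∈ univ.erase k, (d j : ℂ) * ((2 * (η k : ℂ) - e α) ^ (q + 2) / (e α - 2 * (η j : ℂ))))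
        + ∑ β ∈ Cᶜ, (2 * (η k : ℂ) - e α) ^ (q + 2) / (e α - e β)) := by
    intro α hα
    have h1 : HasSum (fun n : ℕ => ∑ j ∈ univ.erase k,
        (d j : ℂ) * ((2 * (η k : ℂ) - e α) ^ (q + 2 + n) / (2 * (η k : ℂ) - 2 * (η j : ℂ)) ^ (n + 1)))
        (∑ j ∈ univ.erase k, (d j : ℂ) * ((2 * (η k : ℂ) - e α) ^ (q + 2) / (e α - 2 * (η j : ℂ)))) := by
      apply hasSum_sum
      intro j hj
      have hgeo := (geo_hasSum_aux _ _ (hxlt α hα j (Finset.mem_erase.mp hj).1) (q + 2)).mul_left (d j : ℂ)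
      convert hgeo using 2
      case e'_3 => rfl
      ring
    have h2 : HasSum (fun n : ℕ => ∑ β ∈ Cᶜ,
        (2 * (η k : ℂ) - e α) ^ (q + 2 + n) / (2 * (η k : ℂ) - e β) ^ (n + 1))
        (∑ β ∈ Cᶜ, (2 * (η k : ℂ) - e α) ^ (q + 2) / (e α - e β)) := by
      apply hasSum_sum
      intro β hβ
      have hgeo := geo_hasSum_aux _ _ (hxlt' α hα β (by simpa using hβ)) (q + 2)
      convert hgeo using 2
      ring
    have h3 := h1.add h2
    have hfun : (fun n : ℕ => (2 * (η k : ℂ) - e α) ^ (q + 2 + n) * P n)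
        = fun n : ℕ => (∑ j ∈ univ.erase k,
            (d j : ℂ) * ((2 * (η k : ℂ) - e α) ^ (q + 2 + n) / (2 * (η k : ℂ) - 2 * (η j : ℂ)) ^ (n + 1)))
          + ∑ β ∈ Cᶜ, (2 * (η k : ℂ) - e α) ^ (q + 2 + n) / (2 * (η k : ℂ) - e β) ^ (n + 1) := by
      funext n
      rw [hP n, mul_add, Finset.mul_sum, Finset.mul_sum]
      congr 1
      · exact Finset.sum_congr rfl fun j _ => by ring
      · exact Finset.sum_congr rfl fun β _ => by ring
    rw [hfun]
    exact h3
  have hhasS : HasSum (fun n : ℕ => S (q + 2 + n) * P n)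
      (∑ α ∈ C, ((∑ j ∈ univ.erase k, (d j : ℂ) * ((2 * (η k : ℂ) - e α) ^ (q + 2) / (e α - 2 * (η j : ℂ))))
        + ∑ β ∈ Cᶜ, (2 * (η k : ℂ) - e α) ^ (q + 2) / (e α - e β))) := by
    have h4 := hasSum_sum hhas
    have hfun : (fun n : ℕ => ∑ α ∈ C, (2 * (η k : ℂ) - e α) ^ (q + 2 + n) * P n)
        = fun n : ℕ => S (q + 2 + n) * P n := by
      funext n
      rw [hS (q + 2 + n), Finset.sum_mul]
    rwa [hfun] at h4
  constructor
  · exact summable_norm_iff.mpr hhasS.summable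
  -- second part: the identity
  rw [hhasS.tsum_eq]
  -- split the sum value
  have hV : ∑ α ∈ C, ((∑ j ∈ univ.erase k, (d j : ℂ) * ((2 * (η k : ℂ) - e α) ^ (q + 2) / (e α - 2 * (η j : ℂ))))
        + ∑ β ∈ Cᶜ, (2 * (η k : ℂ) - e α) ^ (q + 2) / (e α - e β))
      = (∑ α ∈ C, ∑ j ∈ univ.erase k, (d j : ℂ) * ((2 * (η k : ℂ) - e α) ^ (q + 2) / (e α - 2 * (η j : ℂ))))
        + ∑ α ∈ C, ∑ β ∈ Cᶜ, (2 * (η k : ℂ) - e α) ^ (q + 2) / (e α - e β) :=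
    Finset.sum_add_distrib
  -- per-α Richardson multiplied by x^(q+2)
  have hper : ∀ α ∈ C,
      (2 * (η k : ℂ) - e α) ^ (q + 2) - 4 * g * (d k : ℂ) * (2 * (η k : ℂ) - e α) ^ (q + 1)
        + 4 * g * ∑ j ∈ univ.erase k, (d j : ℂ) * ((2 * (η k : ℂ) - e α) ^ (q + 2) / (e α - 2 * (η j : ℂ)))
        + 4 * g * ∑ β ∈ C.erase α, (2 * (η k : ℂ) - e α) ^ (q + 2) / (e α - e β)
        + 4 * g * ∑ β ∈ Cᶜ, (2 * (η k : ℂ) - e α) ^ (q + 2) / (e α - e β) = 0 := by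
    intro α hα
    have h := hrich α
    rw [← Finset.add_sum_erase univ (fun j => (d j : ℂ) / (2 * (η j : ℂ) - e α)) (mem_univ k)] at h
    have h0 : (1 : ℂ) / (e α - e α) = 0 := by simp
    have hsplit : ∑ β ∈ univ.erase α, (1 : ℂ) / (e α - e β)
        = (∑ β ∈ C.erase α, (1 : ℂ) / (e α - e β)) + ∑ β ∈ Cᶜ, (1 : ℂ) / (e α - e β) := by
      have h1 : ∑ β ∈ univ.erase α, (1 : ℂ) / (e α - e β) = ∑ β ∈ univ, (1 : ℂ) / (e α - e β) :=
        Finset.sum_erase (f := fun β => (1 : ℂ) / (e α - e β)) univ h0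
      have h2 : ∑ β ∈ C.erase α, (1 : ℂ) / (e α - e β) = ∑ β ∈ C, (1 : ℂ) / (e α - e β) :=
        Finset.sum_erase (f := fun β => (1 : ℂ) / (e α - e β)) C h0
      rw [h1, ← Finset.sum_add_sum_compl C (fun β => (1 : ℂ) / (e α - e β)), ← h2]
    rw [hsplit] at h
    have e1 : (2 * (η k : ℂ) - e α) ^ (q + 2) * ((d k : ℂ) / (2 * (η k : ℂ) - e α))
        = (d k : ℂ) * (2 * (η k : ℂ) - e α) ^ (q + 1) := by
      field_simp [hx0 α]
      ring
    have e2 : (2 * (η k : ℂ) - e α) ^ (q + 2) * (∑ j ∈ univ.erase k, (d j : ℂ) / (2 * (η j : ℂ) - e α))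
        = -∑ j ∈ univ.erase k, (d j : ℂ) * ((2 * (η k : ℂ) - e α) ^ (q + 2) / (e α - 2 * (η j : ℂ))) := by
      rw [Finset.mul_sum, ← Finset.sum_neg_distrib]
      refine Finset.sum_congr rfl fun j _ => ?_
      have h1 : (2 * (η j : ℂ) - e α) ≠ 0 := sub_ne_zero.mpr (Ne.symm (hed α j))
      have h2 : (e α - 2 * (η j : ℂ)) ≠ 0 := sub_ne_zero.mpr (hed α j)
      field_simp
      ring
    have e3 : (2 * (η k : ℂ) - e α) ^ (q + 2) * (∑ β ∈ C.erase α, (1 : ℂ) / (e α - e β))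
        = ∑ β ∈ C.erase α, (2 * (η k : ℂ) - e α) ^ (q + 2) / (e α - e β) := by
      rw [Finset.mul_sum]
      exact Finset.sum_congr rfl fun β _ => by rw [mul_one_div]
    have e4 : (2 * (η k : ℂ) - e α) ^ (q + 2) * (∑ β ∈ Cᶜ, (1 : ℂ) / (e α - e β))
        = ∑ β ∈ Cᶜ, (2 * (η k : ℂ) - e α) ^ (q + 2) / (e α - e β) := by
      rw [Finset.mul_sum]
      exact Finset.sum_congr rfl fun β _ => by rw [mul_one_div]
    linear_combination (2 * (η k : ℂ) - e α) ^ (q + 2) * h + 4 * g * e1 + 4 * g * e2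
      - 4 * g * e3 - 4 * g * e4
  have H1 : ∑ α ∈ C, ((2 * (η k : ℂ) - e α) ^ (q + 2) - 4 * g * (d k : ℂ) * (2 * (η k : ℂ) - e α) ^ (q + 1)
        + 4 * g * ∑ j ∈ univ.erase k, (d j : ℂ) * ((2 * (η k : ℂ) - e α) ^ (q + 2) / (e α - 2 * (η j : ℂ)))
        + 4 * g * ∑ β ∈ C.erase α, (2 * (η k : ℂ) - e α) ^ (q + 2) / (e α - e β)
        + 4 * g * ∑ β ∈ Cᶜ, (2 * (η k : ℂ) - e α) ^ (q + 2) / (e α - e β)) = 0 :=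
    Finset.sum_eq_zero hper
  simp only [Finset.sum_add_distrib, Finset.sum_sub_distrib, ← Finset.mul_sum] at H1
  rw [← hS (q + 2), ← hS (q + 1)] at H1
  -- the symmetrization identity for the intra-cluster double sum
  have hS0 : S 0 = (Mk : ℂ) := by
    rw [hS]
    simp [hMk]
  have hpair : ∀ α ∈ C, ∀ β ∈ C.erase α,
      (2 * (η k : ℂ) - e α) ^ (q + 2) / (e α - e β)
        + (2 * (η k : ℂ) - e β) ^ (q + 2) / (e β - e α)
      = -∑ i ∈ range (q + 2),
          (2 * (η k : ℂ) - e α) ^ i * (2 * (η k : ℂ) - e β) ^ (q + 2 - 1 - i) := by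
    intro α hα β hβ
    have hne : e α - e β ≠ 0 := sub_ne_zero.mpr fun hh => (Finset.mem_erase.mp hβ).1 (he hh).symm
    have hne' : e β - e α ≠ 0 := sub_ne_zero.mpr fun hh => (Finset.mem_erase.mp hβ).1 (he hh)
    have hg := geom_sum₂_mul (2 * (η k : ℂ) - e α) (2 * (η k : ℂ) - e β) (q + 2)
    simp only [show q + 2 - 1 = q + 1 from rfl] at hg ⊢
    field_simp
    linear_combination (e α - e β) * hg
  have hswap : (∑ α ∈ C, ∑ β ∈ C.erase α, (2 * (η k : ℂ) - e α) ^ (q + 2) / (e α - e β))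
      = ∑ α ∈ C, ∑ β ∈ C.erase α, (2 * (η k : ℂ) - e β) ^ (q + 2) / (e β - e α) :=
    Finset.sum_comm' (fun x y => by
      simp only [Finset.mem_erase]
      constructor
      · rintro ⟨hx, hyx, hy⟩
        exact ⟨⟨fun hh => hyx hh.symm, hx⟩, hy⟩
      · rintro ⟨⟨hxy, hx⟩, hy⟩
        exact ⟨hx, fun hh => hxy hh.symm, hy⟩)
  have hinner : ∀ i ∈ range (q + 2),
      ∑ α ∈ C, ∑ β ∈ C.erase α,
        (2 * (η k : ℂ) - e α) ^ i * (2 * (η k : ℂ) - e β) ^ (q + 2 - 1 - i)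
      = S i * S (q + 2 - 1 - i) - S (q + 1) := by
    intro i hi
    have hi' : i < q + 2 := Finset.mem_range.mp hi
    have h1 : ∀ α ∈ C, ∑ β ∈ C.erase α,
        (2 * (η k : ℂ) - e α) ^ i * (2 * (η k : ℂ) - e β) ^ (q + 2 - 1 - i)
        = (2 * (η k : ℂ) - e α) ^ i * S (q + 2 - 1 - i) - (2 * (η k : ℂ) - e α) ^ (q + 1) := by
      intro α hα
      rw [← Finset.mul_sum, Finset.sum_erase_eq_sub hα, ← hS (q + 2 - 1 - i), mul_sub,
        ← pow_add, show i + (q + 2 - 1 - i) = q + 1 from by omega]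
    rw [Finset.sum_congr rfl h1, Finset.sum_sub_distrib, ← Finset.sum_mul, ← hS i, ← hS (q + 1)]
  have hmain : 2 * (∑ α ∈ C, ∑ β ∈ C.erase α, (2 * (η k : ℂ) - e α) ^ (q + 2) / (e α - e β))
      = -∑ i ∈ range (q + 2), (S i * S (q + 2 - 1 - i) - S (q + 1)) := by
    have step1 : 2 * (∑ α ∈ C, ∑ β ∈ C.erase α, (2 * (η k : ℂ) - e α) ^ (q + 2) / (e α - e β))
        = ∑ α ∈ C, ∑ β ∈ C.erase α,
            ((2 * (η k : ℂ) - e α) ^ (q + 2) / (e α - e β)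
              + (2 * (η k : ℂ) - e β) ^ (q + 2) / (e β - e α)) := by
      rw [two_mul]
      nth_rewrite 2 [hswap]
      rw [← Finset.sum_add_distrib]
      exact Finset.sum_congr rfl fun α _ => Finset.sum_add_distrib.symm
    rw [step1, Finset.sum_congr rfl fun α hα => Finset.sum_congr rfl fun β hβ => hpair α hα β hβ]
    simp only [Finset.sum_neg_distrib]
    congr 1
    rw [Finset.sum_congr rfl fun α (_ : α ∈ C) => Finset.sum_comm, Finset.sum_comm]
    exact Finset.sum_congr rfl hinner
  have hsum : ∑ i ∈ range (q + 2), (S i * S (q + 2 - 1 - i) - S (q + 1))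
      = (Mk : ℂ) * S (q + 1) + S (q + 1) * (Mk : ℂ)
        + (∑ i ∈ Icc 1 q, S (q + 2 - i - 1) * S i) - ((q : ℂ) + 2) * S (q + 1) := by
    rw [Finset.sum_sub_distrib, Finset.sum_const, Finset.card_range, nsmul_eq_mul]
    have hset : range (q + 2) = insert 0 (insert (q + 1) (Icc 1 q)) := by
      ext i
      simp only [Finset.mem_range, Finset.mem_insert, Finset.mem_Icc]
      omega
    rw [hset, Finset.sum_insert (by simp), Finset.sum_insert (by simp),
      show q + 2 - 1 - 0 = q + 1 from rfl, show q + 2 - 1 - (q + 1) = 0 from by omega, hS0]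
    have hc : ∑ i ∈ Icc 1 q, S i * S (q + 2 - 1 - i) = ∑ i ∈ Icc 1 q, S (q + 2 - i - 1) * S i :=
      Finset.sum_congr rfl fun i hi => by
        rw [show q + 2 - 1 - i = q + 2 - i - 1 from by omega, mul_comm]
    rw [hc]
    push_cast
    ring
  have hT2 : 2 * (∑ α ∈ C, ∑ β ∈ C.erase α, (2 * (η k : ℂ) - e α) ^ (q + 2) / (e α - e β))
      = ((q : ℂ) + 2) * S (q + 1) - 2 * (Mk : ℂ) * S (q + 1)
        - ∑ i ∈ Icc 1 q, S (q + 2 - i - 1) * S i := by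
    rw [hmain, hsum]
    ring
  have hclC : (Mk : ℂ) = 1 - 2 * (d k : ℂ) := by exact_mod_cast hcluster
  simp only [show q + 2 - 1 = q + 1 from rfl, show q + 2 - 2 = q from rfl]
  push_cast
  linear_combination H1 + 4 * (g : ℂ) * hV - 2 * (g : ℂ) * hT2
    + 2 * (g : ℂ) * S (q + 1) * hclC
end

section
/- Suppose e_1, …, e_M satisfy the Richardson equations at coupling g and let α ∉ C be an index with |x_γ| < |2η_k − e_α| for every γ ∈ C. Then the series Σ_{n=0}^∞ S_n/(2η_k − e_α)^{n+1} converges absolutely and 1 − 4g·Σ_{j=1}^L d_j/(2η_j − e_α) + 4g·Σ_{β∉C, β≠α} 1/(e_α − e_β) − 4g·Σ_{n=0}^∞ S_n/(2η_k − e_α)^{n+1} = 0. -/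
open Finset

/-- If the Richardson equations hold at coupling `g` and `α ∉ C` satisfies
`|x γ| < |2η k - e α|` for every `γ ∈ C`, then the series
`Σ_n S n / (2η k - e α)^(n+1)` converges absolutely and
`1 - 4g·Σ_j d j/(2η j - e α) + 4g·Σ_{β∉C, β≠α} 1/(e α - e β)
  - 4g·Σ_n S n/(2η k - e α)^(n+1) = 0`. -/
theorem stmt_6
    (M L : ℕ) (hM : 1 ≤ M) (hL : 1 ≤ L)
    (η : Fin L → ℝ) (hη : Function.Injective η) (d : Fin L → ℝ)
    (g : ℝ) (e : Fin M → ℂ)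
    (he : Function.Injective e)
    (hed : ∀ α j, e α ≠ 2 * (η j : ℂ))
    (hrich : ∀ α, (1 : ℂ) - 4 * g * ∑ j, (d j : ℂ) / (2 * (η j : ℂ) - e α)
        + 4 * g * ∑ β ∈ univ.erase α, 1 / (e α - e β) = 0)
    (k : Fin L) (C : Finset (Fin M)) (Mk : ℕ) (hMk : C.card = Mk) (hMk1 : 1 ≤ Mk)
    (S : ℕ → ℂ) (hS : ∀ q, S q = ∑ γ ∈ C, (2 * (η k : ℂ) - e γ) ^ q)
    (α : Fin M) (hα : α ∉ C)
    (hlt : ∀ γ ∈ C, ‖2 * (η k : ℂ) - e γ‖ < ‖2 * (η k : ℂ) - e α‖) :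
    (Summable fun n : ℕ => ‖S n / (2 * (η k : ℂ) - e α) ^ (n + 1)‖) ∧
      (1 : ℂ) - 4 * g * ∑ j, (d j : ℂ) / (2 * (η j : ℂ) - e α)
        + 4 * g * ∑ β ∈ Cᶜ.erase α, 1 / (e α - e β)
        - 4 * g * ∑' n : ℕ, S n / (2 * (η k : ℂ) - e α) ^ (n + 1) = 0 := by
  set w : ℂ := 2 * (η k : ℂ) - e α with hw
  have hwne : w ≠ 0 := by
    intro h
    exact hed α k (by linear_combination -h)
  -- per-γ summability
  have hfun : ∀ γ : Fin M, (fun n : ℕ => (2 * (η k : ℂ) - e γ) ^ n / w ^ (n + 1))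
      = fun n : ℕ => ((2 * (η k : ℂ) - e γ) / w) ^ n * w⁻¹ := by
    intro γ
    funext n
    rw [div_pow, pow_succ]
    field_simp
  have hr : ∀ γ ∈ C, ‖(2 * (η k : ℂ) - e γ) / w‖ < 1 := by
    intro γ hγ
    rw [norm_div, div_lt_one (norm_pos_iff.mpr hwne)]
    exact hlt γ hγ
  have hsumγ : ∀ γ ∈ C, Summable (fun n : ℕ => (2 * (η k : ℂ) - e γ) ^ n / w ^ (n + 1)) := by
    intro γ hγ
    rw [hfun γ]
    exact (summable_geometric_of_norm_lt_one (hr γ hγ)).mul_right _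
  have hSw : ∀ n : ℕ, S n / w ^ (n + 1)
      = ∑ γ ∈ C, (2 * (η k : ℂ) - e γ) ^ n / w ^ (n + 1) := by
    intro n; rw [hS n, Finset.sum_div]
  -- summability of the full series
  have hsumS : Summable (fun n : ℕ => S n / w ^ (n + 1)) := by
    have h2 : Summable (fun n : ℕ => ∑ γ ∈ C, (2 * (η k : ℂ) - e γ) ^ n / w ^ (n + 1)) :=
      summable_sum (fun γ hγ => hsumγ γ hγ)
    exact h2.congr (fun n => (hSw n).symm)
  have hnormsum : Summable fun n : ℕ => ‖S n / w ^ (n + 1)‖ := by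
    have hg : Summable (fun n : ℕ => ∑ γ ∈ C, ‖(2 * (η k : ℂ) - e γ) ^ n / w ^ (n + 1)‖) :=
      summable_sum (fun γ hγ => summable_norm_iff.mpr (hsumγ γ hγ))
    refine Summable.of_nonneg_of_le (fun n => norm_nonneg _) (fun n => ?_) hg
    rw [hSw n]
    exact norm_sum_le _ _
  -- value of each geometric series
  have htγ : ∀ γ ∈ C, ∑' n : ℕ, (2 * (η k : ℂ) - e γ) ^ n / w ^ (n + 1)
      = (e γ - e α)⁻¹ := by
    intro γ hγ
    have hne : e γ ≠ e α := by
      intro h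
      have h2 := hlt γ hγ
      rw [h] at h2
      simp only [hw] at h2
      exact lt_irrefl _ h2
    have h1 : (1 : ℂ) - (2 * (η k : ℂ) - e γ) / w ≠ 0 := by
      rw [sub_ne_zero]
      intro h
      apply hne
      rw [eq_comm, div_eq_one_iff_eq hwne, hw] at h
      linear_combination -h
    rw [hfun γ, tsum_mul_right, tsum_geometric_of_norm_lt_one (hr γ hγ), ← mul_inv]
    congr 1
    rw [hw]
    field_simp [show (2 * (η k : ℂ) - e α) ≠ 0 from hwne]
    ring
  -- total tsum value
  have hT : ∑' n : ℕ, S n / w ^ (n + 1) = -∑ γ ∈ C, 1 / (e α - e γ) := by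
    calc ∑' n : ℕ, S n / w ^ (n + 1)
        = ∑' n : ℕ, ∑ γ ∈ C, (2 * (η k : ℂ) - e γ) ^ n / w ^ (n + 1) := by
          exact tsum_congr hSw
      _ = ∑ γ ∈ C, ∑' n : ℕ, (2 * (η k : ℂ) - e γ) ^ n / w ^ (n + 1) := by
          exact Summable.tsum_finsetSum (fun γ hγ => hsumγ γ hγ)
      _ = ∑ γ ∈ C, (e γ - e α)⁻¹ := Finset.sum_congr rfl htγ
      _ = -∑ γ ∈ C, 1 / (e α - e γ) := by
          rw [← Finset.sum_neg_distrib]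
          refine Finset.sum_congr rfl (fun γ hγ => ?_)
          rw [one_div, ← inv_neg]
          ring_nf
  -- split the Richardson sum
  have hsplit : ∑ β ∈ univ.erase α, (1 : ℂ) / (e α - e β)
      = ∑ β ∈ Cᶜ.erase α, 1 / (e α - e β) + ∑ β ∈ C, 1 / (e α - e β) := by
    rw [← Finset.sum_union]
    · apply Finset.sum_congr _ (fun _ _ => rfl)
      ext β
      simp only [Finset.mem_erase, Finset.mem_union, Finset.mem_compl, Finset.mem_univ,
        and_true]
      constructor
      · intro hβ
        by_cases hβC : β ∈ C
        · exact Or.inr hβC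
        · exact Or.inl ⟨hβ, hβC⟩
      · rintro (⟨hβ, _⟩ | hβC)
        · exact hβ
        · intro h; exact hα (h ▸ hβC)
    · rw [Finset.disjoint_left]
      intro β hβ hβC
      exact (Finset.mem_compl.mp (Finset.mem_erase.mp hβ).2) hβC
  refine ⟨hnormsum, ?_⟩
  have hR := hrich α
  rw [hsplit] at hR
  rw [hT]
  linear_combination hR
end

section
/- At a critical point g_c, the number M_k of pair energies that collapse onto 2η_k satisfies the cluster condition M_k = 1 − 2d_k. -/
open Finset Filter Topology

/-- At a critical point `g_c`, the number `Mk` of pair energies that collapse onto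
`2η k` satisfies the cluster condition `Mk = 1 - 2·d k`. -/
theorem stmt_7
    (M L : ℕ) (hM : 1 ≤ M) (hL : 1 ≤ L)
    (η : Fin L → ℝ) (hη : Function.Injective η) (d : Fin L → ℝ)
    (k : Fin L) (C : Finset (Fin M)) (Mk : ℕ) (hMk : C.card = Mk) (hMk1 : 1 ≤ Mk)
    (gc : ℝ) (hgc : gc ≠ 0) (ε : ℝ) (hε : 0 < ε)
    (e : ℝ → Fin M → ℂ)
    (hinj : ∀ g, g ≠ gc → |g - gc| < ε → Function.Injective (e g))
    (hed : ∀ g, g ≠ gc → |g - gc| < ε → ∀ α j, e g α ≠ 2 * (η j : ℂ))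
    (hrich : ∀ g, g ≠ gc → |g - gc| < ε → ∀ α,
      (1 : ℂ) - 4 * g * ∑ j, (d j : ℂ) / (2 * (η j : ℂ) - e g α)
        + 4 * g * ∑ β ∈ univ.erase α, 1 / (e g α - e g β) = 0)
    (hlimC : ∀ α ∈ C, Tendsto (fun g => e g α) (𝓝[≠] gc) (𝓝 (2 * (η k : ℂ))))
    (estar : Fin M → ℂ)
    (hlimnC : ∀ β, β ∉ C → Tendsto (fun g => e g β) (𝓝[≠] gc) (𝓝 (estar β)))
    (hstar_inj : ∀ β γ, β ∉ C → γ ∉ C → β ≠ γ → estar β ≠ estar γ)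
    (hstar_ne : ∀ β, β ∉ C → ∀ j, estar β ≠ 2 * (η j : ℂ)) :
    (Mk : ℝ) = 1 - 2 * d k := by
  classical
  set K : ℂ := 2 * (η k : ℂ) with hKdef
  -- The three "regular" pieces of the summed, multiplied Richardson equations
  set T1 : ℝ → ℂ := fun g => ∑ α ∈ C, (e g α - K) with hT1
  set T2 : ℝ → ℂ := fun g => ∑ α ∈ C, ∑ j ∈ univ.erase k,
      (d j : ℂ) * (e g α - K) / (2 * (η j : ℂ) - e g α) with hT2
  set T3 : ℝ → ℂ := fun g => ∑ α ∈ C, ∑ β ∈ univ \ C,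
      (e g α - K) / (e g α - e g β) with hT3
  -- Claim 1 : the algebraic identity at each good coupling g
  have claim1 : ∀ g, g ≠ gc → |g - gc| < ε →
      T1 g - 4*g*T2 g + 4*g*T3 g
        + (4*g*(Mk:ℂ)*(d k : ℂ) + 2*g*(Mk:ℂ)*((Mk:ℂ)-1)) = 0 := by
    intro g hg1 hg2
    have hinjg := hinj g hg1 hg2
    have hedg := hed g hg1 hg2
    -- per-α identity : multiply the Richardson equation by (e g α - K)
    have hA : ∀ α, (e g α - K)
        - 4*g*(∑ j, (d j : ℂ) * (e g α - K) / (2 * (η j : ℂ) - e g α))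
        + 4*g*(∑ β ∈ univ.erase α, (e g α - K) / (e g α - e g β)) = 0 := by
      intro α
      have h0 := hrich g hg1 hg2 α
      have e1 : (∑ j, (d j : ℂ) * (e g α - K) / (2 * (η j : ℂ) - e g α))
          = (e g α - K) * ∑ j, (d j : ℂ) / (2 * (η j : ℂ) - e g α) := by
        rw [Finset.mul_sum]; exact Finset.sum_congr rfl (fun j _ => by ring)
      have e2 : (∑ β ∈ univ.erase α, (e g α - K) / (e g α - e g β))
          = (e g α - K) * ∑ β ∈ univ.erase α, 1 / (e g α - e g β) := by
        rw [Finset.mul_sum]; exact Finset.sum_congr rfl (fun β _ => by ring)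
      rw [e1, e2]
      linear_combination (e g α - K) * h0
    -- the j = k term in the middle sum is the constant -(d k)
    have hdk : ∀ α, (d k : ℂ) * (e g α - K) / (2 * (η k : ℂ) - e g α) = -(d k : ℂ) := by
      intro α
      have hne : (2 * (η k : ℂ) - e g α) ≠ 0 := sub_ne_zero.mpr (hedg α k).symm
      rw [hKdef]
      field_simp
      ring
    have hmid : ∀ α, (∑ j, (d j : ℂ) * (e g α - K) / (2 * (η j : ℂ) - e g α))
        = -(d k : ℂ) + ∑ j ∈ univ.erase k,
            (d j : ℂ) * (e g α - K) / (2 * (η j : ℂ) - e g α) := by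
      intro α
      rw [← Finset.sum_erase_add _ _ (Finset.mem_univ k), hdk α, add_comm]
    -- split the pairing sum according to β ∈ C or not
    have hsplit : ∀ α ∈ C, (∑ β ∈ univ.erase α, (e g α - K) / (e g α - e g β))
        = (∑ β ∈ C.erase α, (e g α - K) / (e g α - e g β))
          + ∑ β ∈ univ \ C, (e g α - K) / (e g α - e g β) := by
      intro α hαC
      rw [← Finset.sum_union]
      · congr 1
        ext β
        simp only [Finset.mem_erase, Finset.mem_univ, and_true, Finset.mem_union,
          Finset.mem_sdiff, true_and]
        constructor
        · intro hβ
          by_cases hc : β ∈ C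
          · exact Or.inl ⟨hβ, hc⟩
          · exact Or.inr hc
        · rintro (⟨h1, _⟩ | h1)
          · exact h1
          · exact fun hβα => h1 (hβα ▸ hαC)
      · exact Finset.disjoint_left.mpr (fun β hβ hβ' =>
          (Finset.mem_sdiff.mp hβ').2 (Finset.mem_of_mem_erase hβ))
    -- the pair sum over C equals Mk (Mk - 1) / 2
    have hpair : (∑ α ∈ C, ∑ β ∈ C.erase α, (e g α - K) / (e g α - e g β))
        = (Mk:ℂ) * ((Mk:ℂ) - 1) / 2 := by
      set S := ∑ α ∈ C, ∑ β ∈ C.erase α, (e g α - K) / (e g α - e g β) with hS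
      have hswap : S = ∑ α ∈ C, ∑ β ∈ C.erase α, (e g β - K) / (e g β - e g α) := by
        rw [hS]
        exact Finset.sum_comm' (fun x y => by
          simp only [Finset.mem_erase, ne_eq]
          constructor
          · rintro ⟨hx, hyx, hy⟩; exact ⟨⟨fun h => hyx h.symm, hx⟩, hy⟩
          · rintro ⟨⟨hxy, hx⟩, hy⟩; exact ⟨hx, fun h => hxy h.symm, hy⟩)
      have h2 : S + S = ∑ α ∈ C, ∑ β ∈ C.erase α,
          ((e g α - K) / (e g α - e g β) + (e g β - K) / (e g β - e g α)) := by
        nth_rewrite 2 [hswap]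
        rw [← Finset.sum_add_distrib]
        exact Finset.sum_congr rfl (fun α _ => by rw [← Finset.sum_add_distrib])
      have hone : ∑ α ∈ C, ∑ β ∈ C.erase α,
          ((e g α - K) / (e g α - e g β) + (e g β - K) / (e g β - e g α))
          = (Mk:ℂ) * ((Mk:ℂ) - 1) := by
        have hinner : ∀ α ∈ C, ∑ β ∈ C.erase α,
            ((e g α - K) / (e g α - e g β) + (e g β - K) / (e g β - e g α))
            = ((Mk:ℂ) - 1) := by
          intro α hαC
          have hterm : ∀ β ∈ C.erase α,
              (e g α - K) / (e g α - e g β) + (e g β - K) / (e g β - e g α) = 1 := by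
            intro β hβ
            have hne : e g α ≠ e g β := by
              intro h
              exact (Finset.mem_erase.mp hβ).1 (hinjg h).symm
            have h1 : e g α - e g β ≠ 0 := sub_ne_zero.mpr hne
            have h2 : e g β - e g α ≠ 0 := sub_ne_zero.mpr hne.symm
            field_simp
            ring
          rw [Finset.sum_congr rfl hterm, Finset.sum_const,
            Finset.card_erase_of_mem hαC, hMk, nsmul_eq_mul, mul_one,
            Nat.cast_sub hMk1, Nat.cast_one]
        rw [Finset.sum_congr rfl hinner, Finset.sum_const, hMk, nsmul_eq_mul]
      have hSS : S + S = (Mk:ℂ) * ((Mk:ℂ) - 1) := h2.trans hone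
      have hhalf : S = (S + S) / 2 := by ring
      rw [hhalf, hSS]
    -- per-α identity in separated form
    have hF : ∀ α ∈ C, (e g α - K)
        + (-(4*(g:ℂ)*(∑ j ∈ univ.erase k,
            (d j : ℂ) * (e g α - K) / (2 * (η j : ℂ) - e g α))))
        + 4*(g:ℂ)*((∑ β ∈ C.erase α, (e g α - K) / (e g α - e g β))
            + ∑ β ∈ univ \ C, (e g α - K) / (e g α - e g β))
        + 4*(g:ℂ)*(d k : ℂ) = 0 := by
      intro α hαC
      have h := hA α
      rw [hmid α, hsplit α hαC] at h
      linear_combination h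
    have hsumF : ∑ α ∈ C, ((e g α - K)
        + (-(4*(g:ℂ)*(∑ j ∈ univ.erase k,
            (d j : ℂ) * (e g α - K) / (2 * (η j : ℂ) - e g α))))
        + 4*(g:ℂ)*((∑ β ∈ C.erase α, (e g α - K) / (e g α - e g β))
            + ∑ β ∈ univ \ C, (e g α - K) / (e g α - e g β))
        + 4*(g:ℂ)*(d k : ℂ)) = 0 := Finset.sum_eq_zero hF
    rw [Finset.sum_add_distrib, Finset.sum_add_distrib, Finset.sum_add_distrib,
      Finset.sum_neg_distrib, ← Finset.mul_sum, ← Finset.mul_sum,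
      Finset.sum_add_distrib, Finset.sum_const, hMk, nsmul_eq_mul, hpair] at hsumF
    rw [hT1, hT2, hT3]
    linear_combination hsumF
  -- Claim 2 : the regular part tends to 0 along the punctured neighbourhood
  have hgcoe : Tendsto (fun g : ℝ => (g : ℂ)) (𝓝[≠] gc) (𝓝 (gc : ℂ)) :=
    (Complex.continuous_ofReal.tendsto gc).comp (tendsto_id.mono_left nhdsWithin_le_nhds)
  have hT1lim : Tendsto T1 (𝓝[≠] gc) (𝓝 0) := by
    rw [hT1, show (0:ℂ) = ∑ _α ∈ C, (0:ℂ) by simp]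
    apply tendsto_finset_sum
    intro α hα
    have h := (hlimC α hα).sub (tendsto_const_nhds (x := K))
    rwa [sub_self] at h
  have hT2lim : Tendsto T2 (𝓝[≠] gc) (𝓝 0) := by
    rw [hT2, show (0:ℂ) = ∑ _α ∈ C, ∑ _j ∈ univ.erase k, (0:ℂ) by simp]
    apply tendsto_finset_sum
    intro α hα
    apply tendsto_finset_sum
    intro j hj
    have hjk : j ≠ k := (Finset.mem_erase.mp hj).1
    have hden : (2 * (η j : ℂ) - K) ≠ 0 := by
      rw [hKdef]
      intro h
      have h' : (η j : ℂ) = (η k : ℂ) :=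
        mul_left_cancel₀ two_ne_zero (sub_eq_zero.mp h)
      exact hjk (hη (by exact_mod_cast h'))
    have hnum : Tendsto (fun g => (d j : ℂ) * (e g α - K)) (𝓝[≠] gc)
        (𝓝 ((d j : ℂ) * (K - K))) :=
      (tendsto_const_nhds (x := (d j : ℂ))).mul
        ((hlimC α hα).sub (tendsto_const_nhds (x := K)))
    have hden' : Tendsto (fun g => 2 * (η j : ℂ) - e g α) (𝓝[≠] gc)
        (𝓝 (2 * (η j : ℂ) - K)) :=
      (tendsto_const_nhds (x := 2 * (η j : ℂ))).sub (hlimC α hα)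
    have h := hnum.div hden' hden
    rw [sub_self, mul_zero, zero_div] at h
    exact h
  have hT3lim : Tendsto T3 (𝓝[≠] gc) (𝓝 0) := by
    rw [hT3, show (0:ℂ) = ∑ _α ∈ C, ∑ _β ∈ univ \ C, (0:ℂ) by simp]
    apply tendsto_finset_sum
    intro α hα
    apply tendsto_finset_sum
    intro β hβ
    have hβC : β ∉ C := (Finset.mem_sdiff.mp hβ).2
    have hden : (K - estar β) ≠ 0 :=
      sub_ne_zero.mpr (by rw [hKdef]; exact (hstar_ne β hβC k).symm)
    have hnum : Tendsto (fun g => e g α - K) (𝓝[≠] gc) (𝓝 (K - K)) :=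
      (hlimC α hα).sub (tendsto_const_nhds (x := K))
    have hden' : Tendsto (fun g => e g α - e g β) (𝓝[≠] gc) (𝓝 (K - estar β)) :=
      (hlimC α hα).sub (hlimnC β hβC)
    have h := hnum.div hden' hden
    rw [sub_self, zero_div] at h
    exact h
  -- combine : the whole expression tends to the limit polynomial value
  set Lim : ℂ := 4*(gc:ℂ)*(Mk:ℂ)*(d k : ℂ) + 2*(gc:ℂ)*(Mk:ℂ)*((Mk:ℂ)-1) with hLim
  have hfull : Tendsto (fun g : ℝ => T1 g - 4*(g:ℂ)*T2 g + 4*(g:ℂ)*T3 g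
      + (4*(g:ℂ)*(Mk:ℂ)*(d k : ℂ) + 2*(g:ℂ)*(Mk:ℂ)*((Mk:ℂ)-1))) (𝓝[≠] gc) (𝓝 Lim) := by
    have h1 : Tendsto (fun g : ℝ => T1 g - 4*(g:ℂ)*T2 g + 4*(g:ℂ)*T3 g) (𝓝[≠] gc)
        (𝓝 ((0:ℂ) - 4*(gc:ℂ)*0 + 4*(gc:ℂ)*0)) :=
      (hT1lim.sub (((tendsto_const_nhds (x := (4:ℂ))).mul hgcoe).mul hT2lim)).add
        (((tendsto_const_nhds (x := (4:ℂ))).mul hgcoe).mul hT3lim)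
    rw [show (0:ℂ) - 4*(gc:ℂ)*0 + 4*(gc:ℂ)*0 = 0 from by ring] at h1
    have h2 : Tendsto (fun g : ℝ => 4*(g:ℂ)*(Mk:ℂ)*(d k : ℂ) + 2*(g:ℂ)*(Mk:ℂ)*((Mk:ℂ)-1))
        (𝓝[≠] gc) (𝓝 Lim) := by
      rw [hLim]
      exact (((((tendsto_const_nhds (x := (4:ℂ))).mul hgcoe).mul tendsto_const_nhds).mul
          tendsto_const_nhds)).add
        ((((tendsto_const_nhds (x := (2:ℂ))).mul hgcoe).mul tendsto_const_nhds).mul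
          tendsto_const_nhds)
    have h := h1.add h2
    rwa [zero_add] at h
  -- but the function is eventually 0, hence the limit is 0
  have hev : ∀ᶠ g in 𝓝[≠] gc, T1 g - 4*(g:ℂ)*T2 g + 4*(g:ℂ)*T3 g
      + (4*(g:ℂ)*(Mk:ℂ)*(d k : ℂ) + 2*(g:ℂ)*(Mk:ℂ)*((Mk:ℂ)-1)) = 0 := by
    have hball : ∀ᶠ g in 𝓝[≠] gc, |g - gc| < ε :=
      eventually_nhdsWithin_of_eventually_nhds (eventually_abs_sub_lt gc hε)
    have hne : ∀ᶠ g in 𝓝[≠] gc, g ≠ gc := by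
      have := eventually_mem_nhdsWithin (α := ℝ) (s := {gc}ᶜ) (a := gc)
      exact this.mono (fun x hx => hx)
    filter_upwards [hball, hne] with g h1 h2
    exact claim1 g h2 h1
  have hzero : Tendsto (fun g : ℝ => T1 g - 4*(g:ℂ)*T2 g + 4*(g:ℂ)*T3 g
      + (4*(g:ℂ)*(Mk:ℂ)*(d k : ℂ) + 2*(g:ℂ)*(Mk:ℂ)*((Mk:ℂ)-1))) (𝓝[≠] gc) (𝓝 0) :=
    Tendsto.congr' (hev.mono (fun g h => h.symm)) tendsto_const_nhds
  have hLim0 : Lim = 0 := tendsto_nhds_unique hfull hzero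
  -- transfer to the reals and conclude
  have hreal : 4*gc*(Mk:ℝ)*(d k) + 2*gc*(Mk:ℝ)*((Mk:ℝ)-1) = 0 := by
    have h' := hLim0
    rw [hLim] at h'
    exact_mod_cast h'
  have hMkR : (Mk:ℝ) ≠ 0 := Nat.cast_ne_zero.mpr (by omega)
  have key : (2*gc*(Mk:ℝ)) * (2*(d k) + (Mk:ℝ) - 1) = 0 := by linear_combination hreal
  have h2gc : (2*gc*(Mk:ℝ)) ≠ 0 := mul_ne_zero (mul_ne_zero two_ne_zero hgc) hMkR
  have hfin := (mul_eq_zero.mp key).resolve_left h2gc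
  linarith
end

section
/- At a critical point g_c, the limiting non-collapsing pair energies satisfy, for every α ∉ C: 1 − 4g_c·Σ_{j=1}^L d_j/(2η_j − e_α^*) + 4g_c·M_k/(e_α^* − 2η_k) + 4g_c·Σ_{β∉C, β≠α} 1/(e_α^* − e_β^*) = 0. -/
open Finset Filter Topology

/-- At a critical point `g_c`, the limiting non-collapsing pair energies satisfy, for
every `α ∉ C`:
`1 - 4g_c·Σ_j d j/(2η j - e* α) + 4g_c·Mk/(e* α - 2η k)
  + 4g_c·Σ_{β∉C, β≠α} 1/(e* α - e* β) = 0`. -/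
theorem stmt_10
    (M L : ℕ) (hM : 1 ≤ M) (hL : 1 ≤ L)
    (η : Fin L → ℝ) (hη : Function.Injective η) (d : Fin L → ℝ)
    (k : Fin L) (C : Finset (Fin M)) (Mk : ℕ) (hMk : C.card = Mk) (hMk1 : 1 ≤ Mk)
    (gc : ℝ) (hgc : gc ≠ 0) (ε : ℝ) (hε : 0 < ε)
    (e : ℝ → Fin M → ℂ)
    (hinj : ∀ g, g ≠ gc → |g - gc| < ε → Function.Injective (e g))
    (hed : ∀ g, g ≠ gc → |g - gc| < ε → ∀ α j, e g α ≠ 2 * (η j : ℂ))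
    (hrich : ∀ g, g ≠ gc → |g - gc| < ε → ∀ α,
      (1 : ℂ) - 4 * g * ∑ j, (d j : ℂ) / (2 * (η j : ℂ) - e g α)
        + 4 * g * ∑ β ∈ univ.erase α, 1 / (e g α - e g β) = 0)
    (hlimC : ∀ α ∈ C, Tendsto (fun g => e g α) (𝓝[≠] gc) (𝓝 (2 * (η k : ℂ))))
    (estar : Fin M → ℂ)
    (hlimnC : ∀ β, β ∉ C → Tendsto (fun g => e g β) (𝓝[≠] gc) (𝓝 (estar β)))
    (hstar_inj : ∀ β γ, β ∉ C → γ ∉ C → β ≠ γ → estar β ≠ estar γ)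
    (hstar_ne : ∀ β, β ∉ C → ∀ j, estar β ≠ 2 * (η j : ℂ)) :
    ∀ α, α ∉ C →
      (1 : ℂ) - 4 * gc * ∑ j, (d j : ℂ) / (2 * (η j : ℂ) - estar α)
        + 4 * gc * (Mk : ℂ) / (estar α - 2 * (η k : ℂ))
        + 4 * gc * ∑ β ∈ Cᶜ.erase α, 1 / (estar α - estar β) = 0 := by

  intro α hα
  have hA := hlimnC α hα
  have hcoe : Tendsto (fun g : ℝ => (g : ℂ)) (𝓝[≠] gc) (𝓝 (gc : ℂ)) :=
    (Complex.continuous_ofReal.tendsto gc).mono_left nhdsWithin_le_nhds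
  -- limit of the first sum
  have hsum1 : Tendsto (fun g => ∑ j, (d j : ℂ) / (2 * (η j : ℂ) - e g α)) (𝓝[≠] gc)
      (𝓝 (∑ j, (d j : ℂ) / (2 * (η j : ℂ) - estar α))) := by
    refine tendsto_finset_sum _ fun j _ => ?_
    exact Tendsto.div tendsto_const_nhds (tendsto_const_nhds.sub hA)
      (sub_ne_zero.mpr (Ne.symm (hstar_ne α hα j)))
  -- limit of the collapsing part
  have hsumC : Tendsto (fun g => ∑ β ∈ C, (1 : ℂ) / (e g α - e g β)) (𝓝[≠] gc)
      (𝓝 (∑ _β ∈ C, (1 : ℂ) / (estar α - 2 * (η k : ℂ)))) := by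
    refine tendsto_finset_sum _ fun β hβ => ?_
    exact Tendsto.div tendsto_const_nhds (hA.sub (hlimC β hβ))
      (sub_ne_zero.mpr (hstar_ne α hα k))
  have hCval : (∑ _β ∈ C, (1 : ℂ) / (estar α - 2 * (η k : ℂ)))
      = (Mk : ℂ) / (estar α - 2 * (η k : ℂ)) := by
    rw [Finset.sum_const, hMk, nsmul_eq_mul, mul_one_div]
  -- limit of the non-collapsing part
  have hsumnC : Tendsto (fun g => ∑ β ∈ Cᶜ.erase α, (1 : ℂ) / (e g α - e g β)) (𝓝[≠] gc)
      (𝓝 (∑ β ∈ Cᶜ.erase α, (1 : ℂ) / (estar α - estar β))) := by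
    refine tendsto_finset_sum _ fun β hβ => ?_
    have hβα : β ≠ α := (Finset.mem_erase.mp hβ).1
    have hβnC : β ∉ C := Finset.mem_compl.mp (Finset.mem_erase.mp hβ).2
    exact Tendsto.div tendsto_const_nhds (hA.sub (hlimnC β hβnC))
      (sub_ne_zero.mpr (hstar_inj α β hα hβnC (Ne.symm hβα)))
  -- splitting of the sum over β ≠ α
  have hsplit : ∀ f : Fin M → ℂ,
      ∑ β ∈ univ.erase α, f β = ∑ β ∈ C, f β + ∑ β ∈ Cᶜ.erase α, f β := by
    intro f
    have hdisj : Disjoint C (Cᶜ.erase α) := by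
      rw [Finset.disjoint_left]
      intro b hb hb'
      exact (Finset.mem_compl.mp (Finset.mem_erase.mp hb').2) hb
    rw [← Finset.sum_union hdisj]
    apply Finset.sum_congr _ fun _ _ => rfl
    ext β
    simp only [Finset.mem_erase, Finset.mem_univ, and_true, Finset.mem_union,
      Finset.mem_compl]
    constructor
    · intro h
      exact (em (β ∈ C)).imp id (fun hc => ⟨h, hc⟩)
    · rintro (hc | ⟨h, _⟩)
      · rintro rfl; exact hα hc
      · exact h
  have h2 : Tendsto (fun g => ∑ β ∈ univ.erase α, (1 : ℂ) / (e g α - e g β)) (𝓝[≠] gc)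
      (𝓝 ((Mk : ℂ) / (estar α - 2 * (η k : ℂ))
        + ∑ β ∈ Cᶜ.erase α, (1 : ℂ) / (estar α - estar β))) := by
    have := hsumC.add hsumnC
    rw [hCval] at this
    refine this.congr fun g => ?_
    exact (hsplit fun β => (1 : ℂ) / (e g α - e g β)).symm
  have h4g : Tendsto (fun g : ℝ => (4 : ℂ) * (g : ℂ)) (𝓝[≠] gc) (𝓝 (4 * (gc : ℂ))) :=
    tendsto_const_nhds.mul hcoe
  have hten : Tendsto (fun g : ℝ => (1 : ℂ) - 4 * (g : ℂ) * ∑ j, (d j : ℂ) / (2 * (η j : ℂ) - e g α)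
      + 4 * (g : ℂ) * ∑ β ∈ univ.erase α, (1 : ℂ) / (e g α - e g β)) (𝓝[≠] gc)
      (𝓝 ((1 : ℂ) - 4 * gc * ∑ j, (d j : ℂ) / (2 * (η j : ℂ) - estar α)
        + 4 * gc * ((Mk : ℂ) / (estar α - 2 * (η k : ℂ))
          + ∑ β ∈ Cᶜ.erase α, (1 : ℂ) / (estar α - estar β)))) :=
    (tendsto_const_nhds.sub (h4g.mul hsum1)).add (h4g.mul h2)
  have hev : ∀ᶠ g : ℝ in 𝓝[≠] gc,
      (1 : ℂ) - 4 * (g : ℂ) * ∑ j, (d j : ℂ) / (2 * (η j : ℂ) - e g α)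
        + 4 * (g : ℂ) * ∑ β ∈ univ.erase α, (1 : ℂ) / (e g α - e g β) = 0 := by
    have h1 : ∀ᶠ g in 𝓝[≠] gc, g ≠ gc := by
      filter_upwards [self_mem_nhdsWithin] with g hg
      simpa using hg
    have h2' : ∀ᶠ g in 𝓝[≠] gc, |g - gc| < ε := by
      apply eventually_nhdsWithin_of_eventually_nhds
      filter_upwards [Metric.ball_mem_nhds gc hε] with g hg
      simpa [Real.dist_eq] using hg
    filter_upwards [h1, h2'] with g hg1 hg2
    exact hrich g hg1 hg2 α
  have h0 : Tendsto (fun g : ℝ => (1 : ℂ) - 4 * (g : ℂ) * ∑ j, (d j : ℂ) / (2 * (η j : ℂ) - e g α)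
      + 4 * (g : ℂ) * ∑ β ∈ univ.erase α, (1 : ℂ) / (e g α - e g β)) (𝓝[≠] gc) (𝓝 0) :=
    Tendsto.congr' (hev.mono fun g hg => hg.symm) tendsto_const_nhds
  have hfin := tendsto_nhds_unique hten h0
  linear_combination hfin
end

section
/- Assume in addition that M_k = 1 − 2d_k, that S_1(g) ≠ 0 for every g ≠ g_c in the interval, that the limits χ_p = lim_{g→g_c} S_p(g)/S_1(g) exist for 1 ≤ p ≤ M_k (so χ_1 = 1), and that (max_{γ∈C} |2η_k − e_γ(g)|)^{M_k} = O(|S_1(g)|) as g → g_c. Then the nonzero vector (χ_1, …, χ_{M_k}) satisfies the homogeneous linear system A·χ = 0, where A is the M_k × M_k matrix with entries A_{p,p} = 1 + 4g_c·P_0^*, A_{p,p−1} = −2g_c·(M_k + 1 − p) for 2 ≤ p ≤ M_k, A_{p,q} = 4g_c·P_{q−p}^* for q > p, and A_{p,q} = 0 for q < p − 1. -/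
open Finset Filter Topology


lemma geom_aux (N : ℕ) {a x : ℂ} (ha : a ≠ 0) (hax : a ≠ x) :
    1 / (a - x) = (∑ n ∈ Finset.range N, x ^ n / a ^ (n + 1)) + x ^ N / (a ^ N * (a - x)) := by
  have h : a - x ≠ 0 := sub_ne_zero.mpr hax
  induction N with
  | zero => simp
  | succ N ih =>
      rw [Finset.sum_range_succ, ih]
      have hpow : a ^ N ≠ 0 := pow_ne_zero _ ha
      field_simp
      ring

lemma sym_aux {ι : Type*} [DecidableEq ι] (s : Finset ι) (x : ι → ℂ)
    (hinj : ∀ a ∈ s, ∀ b ∈ s, x a = x b → a = b) (p : ℕ) (hp : 1 ≤ p) :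
    2 * ∑ α ∈ s, ∑ β ∈ s, x α ^ p / (x β - x α) =
      (p : ℂ) * ∑ α ∈ s, x α ^ (p - 1) -
        ∑ m ∈ Finset.range p, (∑ α ∈ s, x α ^ m) * (∑ α ∈ s, x α ^ (p - 1 - m)) := by
  have key : ∀ α ∈ s, ∀ β ∈ s,
      x α ^ p / (x β - x α) + x β ^ p / (x α - x β) =
        -(∑ m ∈ Finset.range p, x α ^ m * x β ^ (p - 1 - m)) +
          (if β = α then (p : ℂ) * x α ^ (p - 1) else 0) := by
    intro α hα β hβ
    by_cases hb : β = α
    · subst hb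
      simp only [sub_self, div_zero, if_pos rfl, add_zero]
      have : ∀ m ∈ Finset.range p, x β ^ m * x β ^ (p - 1 - m) = x β ^ (p - 1) := by
        intro m hm
        rw [← pow_add]
        congr 1
        have := Finset.mem_range.mp hm
        omega
      rw [Finset.sum_congr rfl this, Finset.sum_const, Finset.card_range]
      simp [nsmul_eq_mul]
    · have hne : x β - x α ≠ 0 := sub_ne_zero.mpr (fun h => hb (hinj β hβ α hα h))
      have hne' : x α - x β ≠ 0 := sub_ne_zero.mpr (fun h => hb (hinj α hα β hβ h).symm)
      have hgeo := geom_sum₂_mul (x α) (x β) p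
      rw [if_neg hb, add_zero]
      have hp1 : p - 1 + 1 = p := by omega
      field_simp
      linear_combination (x β - x α) * hgeo
  calc 2 * ∑ α ∈ s, ∑ β ∈ s, x α ^ p / (x β - x α)
      = (∑ α ∈ s, ∑ β ∈ s, x α ^ p / (x β - x α))
        + ∑ α ∈ s, ∑ β ∈ s, x β ^ p / (x α - x β) := by
        rw [two_mul]
        congr 1
        exact Finset.sum_comm.symm
    _ = ∑ α ∈ s, ∑ β ∈ s,
          (x α ^ p / (x β - x α) + x β ^ p / (x α - x β)) := by
        rw [← Finset.sum_add_distrib]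
        exact Finset.sum_congr rfl fun α _ => (Finset.sum_add_distrib).symm
    _ = ∑ α ∈ s, ∑ β ∈ s,
          (-(∑ m ∈ Finset.range p, x α ^ m * x β ^ (p - 1 - m)) +
            (if β = α then (p : ℂ) * x α ^ (p - 1) else 0)) :=
        Finset.sum_congr rfl fun α hα => Finset.sum_congr rfl fun β hβ => key α hα β hβ
    _ = (∑ α ∈ s, ∑ β ∈ s, -(∑ m ∈ Finset.range p, x α ^ m * x β ^ (p - 1 - m)))
        + ∑ α ∈ s, (p : ℂ) * x α ^ (p - 1) := by
        rw [← Finset.sum_add_distrib]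
        refine Finset.sum_congr rfl fun α hα => ?_
        rw [Finset.sum_add_distrib, Finset.sum_ite_eq' s α fun _ => (p : ℂ) * x α ^ (p - 1),
          if_pos hα]
    _ = -(∑ m ∈ Finset.range p,
          (∑ α ∈ s, x α ^ m) * (∑ α ∈ s, x α ^ (p - 1 - m)))
        + ∑ α ∈ s, (p : ℂ) * x α ^ (p - 1) := by
        congr 1
        simp only [Finset.sum_neg_distrib]
        congr 1
        calc ∑ α ∈ s, ∑ β ∈ s, ∑ m ∈ Finset.range p, x α ^ m * x β ^ (p - 1 - m)
            = ∑ α ∈ s, ∑ m ∈ Finset.range p, x α ^ m * ∑ β ∈ s, x β ^ (p - 1 - m) := by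
              refine Finset.sum_congr rfl fun α _ => ?_
              rw [Finset.sum_comm]
              exact Finset.sum_congr rfl fun m _ => (Finset.mul_sum _ _ _).symm
          _ = ∑ m ∈ Finset.range p, ∑ α ∈ s, x α ^ m * ∑ β ∈ s, x β ^ (p - 1 - m) :=
              Finset.sum_comm
          _ = ∑ m ∈ Finset.range p, (∑ α ∈ s, x α ^ m) * ∑ α ∈ s, x α ^ (p - 1 - m) :=
              Finset.sum_congr rfl fun m _ => (Finset.sum_mul _ _ _).symm
    _ = (p : ℂ) * (∑ α ∈ s, x α ^ (p - 1)) -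
        ∑ m ∈ Finset.range p, (∑ α ∈ s, x α ^ m) * (∑ α ∈ s, x α ^ (p - 1 - m)) := by
        rw [← Finset.mul_sum]
        ring



lemma expand_pole (Np p : ℕ) {aa xx : ℂ} (ha : aa ≠ 0) (hax : aa ≠ xx) :
    xx^p * (1/(aa - xx)) =
      (∑ n ∈ Finset.range Np, xx^(p+n)/aa^(n+1)) + xx^(p+Np)/(aa^Np*(aa-xx)) := by
  calc xx^p * (1/(aa-xx))
      = xx^p * ((∑ n ∈ Finset.range Np, xx^n/aa^(n+1)) + xx^Np/(aa^Np*(aa-xx))) := by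
        rw [← geom_aux Np ha hax]
    _ = _ := by
        rw [mul_add, Finset.mul_sum]
        congr 1
        · exact Finset.sum_congr rfl fun n _ => by rw [pow_add]; ring
        · rw [pow_add]; ring

lemma expand_pole' (Np p : ℕ) {aa xx : ℂ} (ha : aa ≠ 0) (hax : aa ≠ xx) (dd : ℂ) :
    xx^p * (dd/(xx - aa)) =
      -((∑ n ∈ Finset.range Np, dd*(xx^(p+n)/aa^(n+1)))
        + dd*(xx^(p+Np)/(aa^Np*(aa-xx)))) := by
  have h := expand_pole Np p ha hax
  calc xx^p * (dd/(xx-aa)) = -(dd * (xx^p * (1/(aa-xx)))) := by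
        rw [show xx - aa = -(aa - xx) from by ring, div_neg]; ring
    _ = -(dd * ((∑ n ∈ Finset.range Np, xx^(p+n)/aa^(n+1)) + xx^(p+Np)/(aa^Np*(aa-xx)))) := by
        rw [h]
    _ = _ := by
        rw [mul_add, Finset.mul_sum]

lemma triple_reorder {ι κ : Type*} (s : Finset ι) (t : Finset κ) (Np : ℕ)
    (F : κ → ℕ → ℂ) (X : ι → ℕ → ℂ) :
    ∑ α ∈ s, ∑ j ∈ t, ∑ n ∈ Finset.range Np, F j n * X α n =
      ∑ n ∈ Finset.range Np, (∑ j ∈ t, F j n) * ∑ α ∈ s, X α n := by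
  calc ∑ α ∈ s, ∑ j ∈ t, ∑ n ∈ Finset.range Np, F j n * X α n
      = ∑ α ∈ s, ∑ n ∈ Finset.range Np, ∑ j ∈ t, F j n * X α n :=
        Finset.sum_congr rfl fun α _ => Finset.sum_comm
    _ = ∑ n ∈ Finset.range Np, ∑ α ∈ s, ∑ j ∈ t, F j n * X α n := Finset.sum_comm
    _ = ∑ n ∈ Finset.range Np, ∑ α ∈ s, (∑ j ∈ t, F j n) * X α n :=
        Finset.sum_congr rfl fun n _ => Finset.sum_congr rfl fun α _ =>
          (Finset.sum_mul _ _ _).symm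
    _ = _ := Finset.sum_congr rfl fun n _ => (Finset.mul_sum _ _ _).symm

lemma row_aux (Mk i0 : ℕ) (hi : i0 < Mk) (gc : ℝ) (Pstar χ : ℕ → ℂ) :
    ∑ j ∈ Finset.range Mk,
      (if j = i0 then (1:ℂ) + 4*gc*Pstar 0
       else if j+1 = i0 then -2*gc*((Mk:ℂ) - (i0:ℂ))
       else if i0 < j then 4*gc*Pstar (j-i0) else 0) * χ (j+1)
    = χ (i0+1)
      - (if 2 ≤ i0+1 then 2*gc*((Mk:ℂ)+1-((i0+1 : ℕ):ℂ))*χ i0 else 0)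
      + ∑ n ∈ Finset.range (Mk - i0), 4*gc*Pstar n * χ (i0+1+n) := by
  set F : ℕ → ℂ := fun j =>
      (if j = i0 then (1:ℂ) + 4*gc*Pstar 0
       else if j+1 = i0 then -2*gc*((Mk:ℂ) - (i0:ℂ))
       else if i0 < j then 4*gc*Pstar (j-i0) else 0) * χ (j+1) with hF
  have hsplit : ∑ j ∈ Finset.range Mk, F j
      = (∑ j ∈ Finset.range (i0+1), F j) + ∑ j ∈ Finset.Ico (i0+1) Mk, F j := by
    rw [Finset.range_eq_Ico, ← Finset.sum_Ico_consecutive _ (Nat.zero_le _) hi,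
      ← Finset.range_eq_Ico]
  have hA : ∑ j ∈ Finset.range (i0+1), F j
      = ((1:ℂ) + 4*gc*Pstar 0) * χ (i0+1)
        - (if 2 ≤ i0+1 then 2*gc*((Mk:ℂ)+1-((i0+1 : ℕ):ℂ))*χ i0 else 0) := by
    rcases Nat.eq_zero_or_pos i0 with h0 | h0
    · subst h0
      simp [hF]
    · obtain ⟨t, rfl⟩ : ∃ t, i0 = t + 1 := ⟨i0 - 1, by omega⟩
      rw [Finset.sum_range_succ, Finset.sum_range_succ]
      have hz : ∑ j ∈ Finset.range t, F j = 0 := by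
        refine Finset.sum_eq_zero fun j hj => ?_
        have hj' := Finset.mem_range.mp hj
        simp only [hF]
        rw [if_neg (by omega), if_neg (by omega), if_neg (by omega), zero_mul]
      rw [hz, zero_add]
      simp only [hF]
      split_ifs <;> first | omega | (push_cast; ring)
  have hB : ∑ j ∈ Finset.Ico (i0+1) Mk, F j
      = ∑ n ∈ Finset.Ico 1 (Mk - i0), 4*gc*Pstar n * χ (i0+1+n) := by
    rw [Finset.sum_Ico_eq_sum_range, Finset.sum_Ico_eq_sum_range]
    have hlen : Mk - (i0+1) = Mk - i0 - 1 := by omega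
    rw [hlen]
    refine Finset.sum_congr rfl fun j hj => ?_
    have hj' := Finset.mem_range.mp hj
    simp only [hF]
    split_ifs <;>
      first
        | omega
        | (rw [show i0+1+j - i0 = 1+j from by omega,
              show i0+1+j+1 = i0+1+(1+j) from by omega])
  have hC : ∑ n ∈ Finset.range (Mk - i0), 4*gc*Pstar n * χ (i0+1+n)
      = 4*gc*Pstar 0 * χ (i0+1) + ∑ n ∈ Finset.Ico 1 (Mk - i0), 4*gc*Pstar n * χ (i0+1+n) := by
    rw [Finset.range_eq_Ico, Finset.sum_eq_sum_Ico_succ_bot (by omega)]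
  rw [hsplit, hA, hB, hC]
  ring

/-- At a critical point `g_c` with cluster condition `Mk = 1 - 2·d k`, the nonzero
vector `(χ 1, …, χ Mk)` of limit ratios `χ p = lim_{g→g_c} S p (g)/S 1 (g)` satisfies
the homogeneous linear system `A·χ = 0`, where `A` is the `Mk × Mk` matrix with
`A p p = 1 + 4g_c·P₀*`, `A p (p-1) = -2g_c·(Mk+1-p)`, `A p q = 4g_c·P*_{q-p}` for
`q > p` and `A p q = 0` for `q < p - 1`. -/
theorem stmt_11
    (M L : ℕ) (hM : 1 ≤ M) (hL : 1 ≤ L)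
    (η : Fin L → ℝ) (hη : Function.Injective η) (d : Fin L → ℝ)
    (k : Fin L) (C : Finset (Fin M)) (Mk : ℕ) (hMk : C.card = Mk) (hMk1 : 1 ≤ Mk)
    (hCne : C.Nonempty)
    (gc : ℝ) (hgc : gc ≠ 0) (ε : ℝ) (hε : 0 < ε)
    (e : ℝ → Fin M → ℂ)
    (hinj : ∀ g, g ≠ gc → |g - gc| < ε → Function.Injective (e g))
    (hed : ∀ g, g ≠ gc → |g - gc| < ε → ∀ α j, e g α ≠ 2 * (η j : ℂ))
    (hrich : ∀ g, g ≠ gc → |g - gc| < ε → ∀ α,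
      (1 : ℂ) - 4 * g * ∑ j, (d j : ℂ) / (2 * (η j : ℂ) - e g α)
        + 4 * g * ∑ β ∈ univ.erase α, 1 / (e g α - e g β) = 0)
    (hlimC : ∀ α ∈ C, Tendsto (fun g => e g α) (𝓝[≠] gc) (𝓝 (2 * (η k : ℂ))))
    (estar : Fin M → ℂ)
    (hlimnC : ∀ β, β ∉ C → Tendsto (fun g => e g β) (𝓝[≠] gc) (𝓝 (estar β)))
    (hstar_inj : ∀ β γ, β ∉ C → γ ∉ C → β ≠ γ → estar β ≠ estar γ)
    (hstar_ne : ∀ β, β ∉ C → ∀ j, estar β ≠ 2 * (η j : ℂ))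
    (S : ℝ → ℕ → ℂ)
    (hS : ∀ g q, S g q = ∑ α ∈ C, (2 * (η k : ℂ) - e g α) ^ q)
    (Pstar : ℕ → ℂ)
    (hPstar : ∀ n, Pstar n =
        ∑ j ∈ univ.erase k, (d j : ℂ) / (2 * (η k : ℂ) - 2 * (η j : ℂ)) ^ (n + 1)
        + ∑ β ∈ Cᶜ, 1 / (2 * (η k : ℂ) - estar β) ^ (n + 1))
    (hcluster : (Mk : ℝ) = 1 - 2 * d k)
    (hS1ne : ∀ g, g ≠ gc → |g - gc| < ε → S g 1 ≠ 0)
    (χ : ℕ → ℂ)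
    (hχ : ∀ p, 1 ≤ p → p ≤ Mk →
      Tendsto (fun g => S g p / S g 1) (𝓝[≠] gc) (𝓝 (χ p)))
    (hχ1 : χ 1 = 1)
    (hbigO : (fun g => (C.sup' hCne fun γ => ‖2 * (η k : ℂ) - e g γ‖) ^ Mk)
        =O[𝓝[≠] gc] fun g => S g 1) :
    (Matrix.of fun i j : Fin Mk =>
        if (j : ℕ) = (i : ℕ) then (1 : ℂ) + 4 * gc * Pstar 0
        else if (j : ℕ) + 1 = (i : ℕ) then -2 * gc * ((Mk : ℂ) - ((i : ℕ) : ℂ))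
        else if (i : ℕ) < (j : ℕ) then 4 * gc * Pstar ((j : ℕ) - (i : ℕ))
        else 0).mulVec (fun i : Fin Mk => χ ((i : ℕ) + 1)) = 0
      ∧ (fun i : Fin Mk => χ ((i : ℕ) + 1)) ≠ 0 := by
  classical
  set x : ℝ → Fin M → ℂ := fun g α => 2 * (η k : ℂ) - e g α with hxdef
  set a : Fin L → ℂ := fun j => 2 * (η k : ℂ) - 2 * (η j : ℂ) with hadef
  set Pg : ℝ → ℕ → ℂ := fun g n =>
    (∑ j ∈ univ.erase k, (d j : ℂ) / (a j) ^ (n+1)) + ∑ β ∈ Cᶜ, 1 / (x g β) ^ (n+1)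
    with hPgdef
  set Hh : ℝ → ℕ → Fin M → ℂ := fun g p α =>
    (∑ j ∈ univ.erase k, (d j : ℂ) / ((a j) ^ (Mk+1-p) * (a j - x g α)))
      + ∑ β ∈ Cᶜ, 1 / ((x g β) ^ (Mk+1-p) * (x g β - x g α)) with hHdef
  set R : ℝ → ℕ → ℂ := fun g p => ∑ α ∈ C, (x g α) ^ (Mk+1) * Hh g p α with hRdef
  have hSx : ∀ g q, S g q = ∑ α ∈ C, (x g α) ^ q := hS
  have hgood : ∀ᶠ g in 𝓝[≠] gc, g ≠ gc ∧ |g - gc| < ε := by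
    have h1 : ∀ᶠ g in 𝓝[≠] gc, g ≠ gc := self_mem_nhdsWithin
    have h2 : ∀ᶠ g in 𝓝[≠] gc, |g - gc| < ε :=
      eventually_nhdsWithin_of_eventually_nhds (eventually_abs_sub_lt gc hε)
    exact h1.and h2
  have hglim : Tendsto (fun g : ℝ => (g : ℂ)) (𝓝[≠] gc) (𝓝 (gc : ℂ)) :=
    (Complex.continuous_ofReal.tendsto gc).comp
      (tendsto_id.mono_left nhdsWithin_le_nhds)
  have haj : ∀ j : Fin L, j ≠ k → a j ≠ 0 := by
    intro j hj
    simp only [hadef, sub_ne_zero]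
    intro h
    exact hj (hη (by exact_mod_cast mul_left_cancel₀ (two_ne_zero (α := ℂ)) h)).symm
  have hxlim : ∀ α ∈ C, Tendsto (fun g => x g α) (𝓝[≠] gc) (𝓝 0) := by
    intro α hα
    have := tendsto_const_nhds (x := (2 * (η k : ℂ))) (f := 𝓝[≠] (gc:ℝ)) |>.sub (hlimC α hα)
    simpa [hxdef] using this
  have hxblim : ∀ β, β ∉ C →
      Tendsto (fun g => x g β) (𝓝[≠] gc) (𝓝 (2 * (η k : ℂ) - estar β)) := by
    intro β hβ
    exact tendsto_const_nhds.sub (hlimnC β hβ)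
  have hxbne : ∀ β, β ∉ C → 2 * (η k : ℂ) - estar β ≠ 0 := by
    intro β hβ
    rw [sub_ne_zero]
    exact (hstar_ne β hβ k).symm
  have hSlim0 : ∀ q, 1 ≤ q → Tendsto (fun g => S g q) (𝓝[≠] gc) (𝓝 0) := by
    intro q hq
    simp only [hSx]
    have : Tendsto (fun g => ∑ α ∈ C, (x g α) ^ q) (𝓝[≠] gc)
        (𝓝 (∑ α ∈ C, (0:ℂ) ^ q)) :=
      tendsto_finset_sum _ fun α hα => (hxlim α hα).pow q
    simpa [zero_pow (by omega : q ≠ 0)] using this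
  have hPglim : ∀ n, Tendsto (fun g => Pg g n) (𝓝[≠] gc) (𝓝 (Pstar n)) := by
    intro n
    rw [hPstar n]
    simp only [hPgdef]
    refine Tendsto.add tendsto_const_nhds ?_
    refine tendsto_finset_sum _ fun β hβ => ?_
    have hβ' : β ∉ C := by simpa using hβ
    refine Tendsto.div tendsto_const_nhds ((hxblim β hβ').pow (n+1)) ?_
    · exact pow_ne_zero _ (hxbne β hβ')
  -- remainder term estimate
  have hRlim : ∀ p : ℕ, Tendsto (fun g => R g p / S g 1) (𝓝[≠] gc) (𝓝 0) := by
    intro p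
    have hdiv : ∀ g, R g p / S g 1 = ∑ α ∈ C, (x g α) ^ (Mk+1) * Hh g p α / S g 1 := by
      intro g; simp only [hRdef]; rw [Finset.sum_div]
    simp only [hdiv]
    have : Tendsto (fun g => ∑ α ∈ C, (x g α) ^ (Mk+1) * Hh g p α / S g 1) (𝓝[≠] gc)
        (𝓝 (∑ α ∈ C, (0:ℂ))) := by
      refine tendsto_finset_sum _ fun α hα => ?_
      -- H limit
      have hHlim : Tendsto (fun g => Hh g p α) (𝓝[≠] gc)
          (𝓝 ((∑ j ∈ univ.erase k, (d j : ℂ) / ((a j) ^ (Mk+1-p) * (a j))) +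
            ∑ β ∈ Cᶜ, 1 / ((2 * (η k : ℂ) - estar β) ^ (Mk+1-p) *
              ((2 * (η k : ℂ) - estar β) - 0)))) := by
        simp only [hHdef]
        refine Tendsto.add ?_ ?_
        · have : Tendsto (fun g => ∑ j ∈ univ.erase k,
              (d j : ℂ) / ((a j) ^ (Mk+1-p) * (a j - x g α))) (𝓝[≠] gc)
              (𝓝 (∑ j ∈ univ.erase k, (d j : ℂ) / ((a j) ^ (Mk+1-p) * (a j - 0)))) := by
            refine tendsto_finset_sum _ fun j hj => ?_
            have hj' : j ≠ k := by simpa using (Finset.mem_erase.mp hj).1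
            refine Tendsto.div tendsto_const_nhds
              (Tendsto.mul tendsto_const_nhds (tendsto_const_nhds.sub (hxlim α hα))) ?_
            rw [sub_zero]
            exact mul_ne_zero (pow_ne_zero _ (haj j hj')) (haj j hj')
          simpa using this
        · refine tendsto_finset_sum _ fun β hβ => ?_
          have hβ' : β ∉ C := by simpa using hβ
          refine Tendsto.div tendsto_const_nhds
            (Tendsto.mul ((hxblim β hβ').pow _) ((hxblim β hβ').sub (hxlim α hα))) ?_
          rw [sub_zero]
          exact mul_ne_zero (pow_ne_zero _ (hxbne β hβ')) (hxbne β hβ')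
      -- bigO bound
      have hO : (fun g => (x g α) ^ Mk) =O[𝓝[≠] gc] fun g => S g 1 := by
        refine Asymptotics.IsBigO.trans ?_ hbigO
        refine Asymptotics.isBigO_of_le _ fun g => ?_
        have hle : ‖x g α‖ ≤ C.sup' hCne fun γ => ‖2 * (η k : ℂ) - e g γ‖ := by
          simp only [hxdef]
          exact Finset.le_sup' (fun γ => ‖2 * (η k : ℂ) - e g γ‖) hα
        have h0 : (0:ℝ) ≤ C.sup' hCne fun γ => ‖2 * (η k : ℂ) - e g γ‖ :=
          le_trans (norm_nonneg _) hle
        rw [norm_pow, Real.norm_eq_abs, abs_of_nonneg (pow_nonneg h0 _)]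
        exact pow_le_pow_left₀ (norm_nonneg _) hle _
      obtain ⟨c, hc⟩ := Asymptotics.isBigO_iff.mp hO
      have hbound : ∀ᶠ g in 𝓝[≠] gc, ‖(x g α) ^ Mk / S g 1‖ ≤ c := by
        filter_upwards [hc, hgood] with g hg ⟨hg1, hg2⟩
        have hs1 := hS1ne g hg1 hg2
        rw [norm_div, div_le_iff₀ (norm_pos_iff.mpr hs1)]
        exact hg
      have hBdd : Filter.IsBoundedUnder (· ≤ ·) (𝓝[≠] gc)
          (fun g => ‖(x g α) ^ Mk / S g 1‖) := ⟨c, by simpa [eventually_map] using hbound⟩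
      have hfactor : ∀ g, (x g α) ^ (Mk+1) * Hh g p α / S g 1 =
          (x g α * Hh g p α) * ((x g α) ^ Mk / S g 1) := by
        intro g; rw [pow_succ]; ring
      simp only [hfactor]
      have hzero : Tendsto (fun g => x g α * Hh g p α) (𝓝[≠] gc) (𝓝 0) := by
        have := (hxlim α hα).mul hHlim
        simpa using this
      exact hzero.zero_mul_isBoundedUnder_le hBdd
    simpa using this
  have hS0 : ∀ g, S g 0 = (Mk : ℂ) := by
    intro g
    rw [hSx]
    simp [hMk]
  have key : ∀ g, g ≠ gc → |g - gc| < ε → ∀ p : ℕ, 1 ≤ p → p ≤ Mk →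
      S g p - 2*(g:ℂ)*((Mk:ℂ)+1-(p:ℂ)) * S g (p-1)
        + (if p = 1 then 2*(g:ℂ)*(Mk:ℂ)^2 else 0)
        - 2*(g:ℂ)*∑ m ∈ Finset.Ico 1 (p-1), S g m * S g (p-1-m)
        + 4*(g:ℂ)*∑ n ∈ Finset.range (Mk+1-p), Pg g n * S g (p+n)
        + 4*(g:ℂ)*R g p = 0 := by
    intro g hg1 hg2 p hp1 hpMk
    have hx0 : ∀ α : Fin M, x g α ≠ 0 := fun α =>
      sub_ne_zero.mpr (Ne.symm (hed g hg1 hg2 α k))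
    have hxinj : ∀ α ∈ C, ∀ β ∈ C, x g α = x g β → α = β := by
      intro α _ β _ h
      refine hinj g hg1 hg2 ?_
      simp only [hxdef] at h
      linear_combination -h
    have hxne : ∀ α β : Fin M, α ≠ β → x g β ≠ x g α := by
      intro α β hne h
      apply hne
      refine (hinj g hg1 hg2 ?_).symm
      simp only [hxdef] at h
      linear_combination -h
    have haxj : ∀ (α : Fin M) (j : Fin L), a j ≠ x g α := by
      intro α j h
      apply hed g hg1 hg2 α j
      simp only [hxdef, hadef] at h
      linear_combination h
    have perα : ∀ α ∈ C,
        (x g α)^p - 4*(g:ℂ)*(d k : ℂ)*(x g α)^(p-1)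
          + 4*(g:ℂ)*∑ j ∈ univ.erase k,
              ((∑ n ∈ Finset.range (Mk+1-p), (d j : ℂ) * ((x g α)^(p+n) / (a j)^(n+1)))
                + (d j : ℂ) * ((x g α)^(p+(Mk+1-p)) / ((a j)^(Mk+1-p) * (a j - x g α))))
          + 4*(g:ℂ)*∑ β ∈ Cᶜ,
              ((∑ n ∈ Finset.range (Mk+1-p), (x g α)^(p+n) / (x g β)^(n+1))
                + (x g α)^(p+(Mk+1-p)) / ((x g β)^(Mk+1-p) * (x g β - x g α)))
          + 4*(g:ℂ)*∑ β ∈ C, (x g α)^p / (x g β - x g α) = 0 := by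
      intro α hα
      have h0 := hrich g hg1 hg2 α
      have hterm : ∀ β, (1:ℂ)/(e g α - e g β) = 1/(x g β - x g α) := by
        intro β
        congr 1
        simp only [hxdef]
        ring
      have hA : ∑ j, (d j:ℂ)/(2*(η j:ℂ) - e g α)
          = (d k:ℂ)/(x g α) + ∑ j ∈ univ.erase k, (d j:ℂ)/(x g α - a j) := by
        rw [← Finset.add_sum_erase _ _ (Finset.mem_univ k)]
        refine congrArg₂ (· + ·) rfl (Finset.sum_congr rfl fun j hj => ?_)
        rw [show x g α - a j = 2*(η j:ℂ) - e g α from by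
          simp only [hxdef, hadef]; ring]
      have hCsplit : univ.erase α = (C.erase α) ∪ Cᶜ := by
        ext γ
        simp only [Finset.mem_erase, Finset.mem_union, Finset.mem_compl, Finset.mem_univ,
          and_true]
        constructor
        · intro hne
          by_cases hc : γ ∈ C
          · exact Or.inl ⟨hne, hc⟩
          · exact Or.inr hc
        · rintro (⟨hne, _⟩ | hc)
          · exact hne
          · intro h
            exact hc (h ▸ hα)
      have hB : ∑ β ∈ univ.erase α, 1/(e g α - e g β)
          = (∑ β ∈ C, 1/(x g β - x g α)) + ∑ β ∈ Cᶜ, 1/(x g β - x g α) := by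
        rw [hCsplit, Finset.sum_union
          (disjoint_compl_right.mono_left (Finset.erase_subset _ _))]
        congr 1
        calc ∑ β ∈ C.erase α, 1/(e g α - e g β)
            = ∑ β ∈ C.erase α, 1/(x g β - x g α) :=
              Finset.sum_congr rfl fun β _ => hterm β
          _ = (∑ β ∈ C, 1/(x g β - x g α)) - 1/(x g α - x g α) :=
              Finset.sum_erase_eq_sub hα
          _ = ∑ β ∈ C, 1/(x g β - x g α) := by simp
        exact Finset.sum_congr rfl fun β _ => hterm β
      rw [hA, hB] at h0
      have hmul : (x g α)^p * ((1:ℂ)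
          - 4*g*((d k:ℂ)/(x g α) + ∑ j ∈ univ.erase k, (d j:ℂ)/(x g α - a j))
          + 4*g*((∑ β ∈ C, 1/(x g β - x g α)) + ∑ β ∈ Cᶜ, 1/(x g β - x g α))) = 0 := by
        rw [h0, mul_zero]
      have hterm1 : (x g α)^p * ((d k:ℂ)/(x g α)) = (d k:ℂ)*(x g α)^(p-1) := by
        have hps : (x g α)^p = (x g α)^(p-1) * (x g α) := by
          rw [← pow_succ]
          congr 1
          omega
        rw [hps]
        field_simp [hx0 α]
      have hmulsum1 : (x g α)^p * ∑ j ∈ univ.erase k, (d j:ℂ)/(x g α - a j)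
          = -(∑ j ∈ univ.erase k,
              ((∑ n ∈ Finset.range (Mk+1-p), (d j : ℂ) * ((x g α)^(p+n) / (a j)^(n+1)))
                + (d j : ℂ) * ((x g α)^(p+(Mk+1-p)) / ((a j)^(Mk+1-p) * (a j - x g α))))) := by
        rw [Finset.mul_sum, ← Finset.sum_neg_distrib]
        refine Finset.sum_congr rfl fun j hj => ?_
        have hj' : j ≠ k := (Finset.mem_erase.mp hj).1
        exact expand_pole' (Mk+1-p) p (haj j hj') (haxj α j) (d j : ℂ)
      have hmulsum2 : (x g α)^p * ∑ β ∈ Cᶜ, (1:ℂ)/(x g β - x g α)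
          = ∑ β ∈ Cᶜ,
              ((∑ n ∈ Finset.range (Mk+1-p), (x g α)^(p+n) / (x g β)^(n+1))
                + (x g α)^(p+(Mk+1-p)) / ((x g β)^(Mk+1-p) * (x g β - x g α))) := by
        rw [Finset.mul_sum]
        refine Finset.sum_congr rfl fun β hβ => ?_
        have hβ' : β ∉ C := by simpa using hβ
        have hne : β ≠ α := fun h => hβ' (h ▸ hα)
        exact expand_pole (Mk+1-p) p (hx0 β) (hxne α β hne.symm)
      have hmulsum3 : (x g α)^p * ∑ β ∈ C, (1:ℂ)/(x g β - x g α)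
          = ∑ β ∈ C, (x g α)^p / (x g β - x g α) := by
        rw [Finset.mul_sum]
        exact Finset.sum_congr rfl fun β _ => mul_one_div _ _
      linear_combination hmul + 4*(g:ℂ)*hterm1 + 4*(g:ℂ)*hmulsum1
        - 4*(g:ℂ)*hmulsum2 - 4*(g:ℂ)*hmulsum3
    have total : ∑ α ∈ C,
        ((x g α)^p - 4*(g:ℂ)*(d k : ℂ)*(x g α)^(p-1)
          + 4*(g:ℂ)*∑ j ∈ univ.erase k,
              ((∑ n ∈ Finset.range (Mk+1-p), (d j : ℂ) * ((x g α)^(p+n) / (a j)^(n+1)))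
                + (d j : ℂ) * ((x g α)^(p+(Mk+1-p)) / ((a j)^(Mk+1-p) * (a j - x g α))))
          + 4*(g:ℂ)*∑ β ∈ Cᶜ,
              ((∑ n ∈ Finset.range (Mk+1-p), (x g α)^(p+n) / (x g β)^(n+1))
                + (x g α)^(p+(Mk+1-p)) / ((x g β)^(Mk+1-p) * (x g β - x g α)))
          + 4*(g:ℂ)*∑ β ∈ C, (x g α)^p / (x g β - x g α)) = 0 :=
      Finset.sum_eq_zero perα
    have hpN : p + (Mk+1-p) = Mk+1 := by omega
    simp only [hpN] at total
    rw [Finset.sum_add_distrib, Finset.sum_add_distrib, Finset.sum_add_distrib,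
      Finset.sum_sub_distrib] at total
    have c1 : ∑ α ∈ C, (x g α)^p = S g p := (hSx g p).symm
    have c2 : ∑ α ∈ C, 4*(g:ℂ)*(d k : ℂ)*(x g α)^(p-1)
        = 4*(g:ℂ)*(d k : ℂ)*S g (p-1) := by
      rw [hSx]
      exact (Finset.mul_sum _ _ _).symm
    have c3 : ∑ α ∈ C, (4*(g:ℂ)*∑ j ∈ univ.erase k,
          ((∑ n ∈ Finset.range (Mk+1-p), (d j : ℂ) * ((x g α)^(p+n) / (a j)^(n+1)))
            + (d j : ℂ) * ((x g α)^(Mk+1) / ((a j)^(Mk+1-p) * (a j - x g α)))))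
        = 4*(g:ℂ)*((∑ n ∈ Finset.range (Mk+1-p),
              (∑ j ∈ univ.erase k, (d j : ℂ)/(a j)^(n+1)) * S g (p+n))
            + ∑ α ∈ C, (x g α)^(Mk+1) * ∑ j ∈ univ.erase k,
              (d j : ℂ)/((a j)^(Mk+1-p) * (a j - x g α))) := by
      rw [← Finset.mul_sum]
      congr 1
      calc ∑ α ∈ C, ∑ j ∈ univ.erase k,
            ((∑ n ∈ Finset.range (Mk+1-p), (d j : ℂ) * ((x g α)^(p+n) / (a j)^(n+1)))
              + (d j : ℂ) * ((x g α)^(Mk+1) / ((a j)^(Mk+1-p) * (a j - x g α))))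
          = ∑ α ∈ C,
              ((∑ j ∈ univ.erase k, ∑ n ∈ Finset.range (Mk+1-p),
                  (d j : ℂ) * ((x g α)^(p+n) / (a j)^(n+1)))
                + ∑ j ∈ univ.erase k,
                  (d j : ℂ) * ((x g α)^(Mk+1) / ((a j)^(Mk+1-p) * (a j - x g α)))) :=
            Finset.sum_congr rfl fun α _ => Finset.sum_add_distrib
        _ = (∑ α ∈ C, ∑ j ∈ univ.erase k, ∑ n ∈ Finset.range (Mk+1-p),
              (d j : ℂ) * ((x g α)^(p+n) / (a j)^(n+1)))
            + ∑ α ∈ C, ∑ j ∈ univ.erase k,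
              (d j : ℂ) * ((x g α)^(Mk+1) / ((a j)^(Mk+1-p) * (a j - x g α))) :=
            Finset.sum_add_distrib
        _ = _ := by
            congr 1
            · calc ∑ α ∈ C, ∑ j ∈ univ.erase k, ∑ n ∈ Finset.range (Mk+1-p),
                    (d j : ℂ) * ((x g α)^(p+n) / (a j)^(n+1))
                  = ∑ α ∈ C, ∑ j ∈ univ.erase k, ∑ n ∈ Finset.range (Mk+1-p),
                    ((d j : ℂ)/(a j)^(n+1)) * (x g α)^(p+n) :=
                    Finset.sum_congr rfl fun α _ => Finset.sum_congr rfl fun j _ =>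
                      Finset.sum_congr rfl fun n _ => by ring
                _ = ∑ n ∈ Finset.range (Mk+1-p),
                    (∑ j ∈ univ.erase k, (d j : ℂ)/(a j)^(n+1)) * ∑ α ∈ C, (x g α)^(p+n) :=
                    triple_reorder _ _ _ _ _
                _ = _ := Finset.sum_congr rfl fun n _ => by rw [hSx]
            · refine Finset.sum_congr rfl fun α _ => ?_
              rw [Finset.mul_sum]
              exact Finset.sum_congr rfl fun j _ => by ring
    have c4 : ∑ α ∈ C, (4*(g:ℂ)*∑ β ∈ Cᶜ,
          ((∑ n ∈ Finset.range (Mk+1-p), (x g α)^(p+n) / (x g β)^(n+1))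
            + (x g α)^(Mk+1) / ((x g β)^(Mk+1-p) * (x g β - x g α))))
        = 4*(g:ℂ)*((∑ n ∈ Finset.range (Mk+1-p),
              (∑ β ∈ Cᶜ, (1:ℂ)/(x g β)^(n+1)) * S g (p+n))
            + ∑ α ∈ C, (x g α)^(Mk+1) * ∑ β ∈ Cᶜ,
              (1:ℂ)/((x g β)^(Mk+1-p) * (x g β - x g α))) := by
      rw [← Finset.mul_sum]
      congr 1
      calc ∑ α ∈ C, ∑ β ∈ Cᶜ,
            ((∑ n ∈ Finset.range (Mk+1-p), (x g α)^(p+n) / (x g β)^(n+1))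
              + (x g α)^(Mk+1) / ((x g β)^(Mk+1-p) * (x g β - x g α)))
          = ∑ α ∈ C,
              ((∑ β ∈ Cᶜ, ∑ n ∈ Finset.range (Mk+1-p), (x g α)^(p+n) / (x g β)^(n+1))
                + ∑ β ∈ Cᶜ, (x g α)^(Mk+1) / ((x g β)^(Mk+1-p) * (x g β - x g α))) :=
            Finset.sum_congr rfl fun α _ => Finset.sum_add_distrib
        _ = (∑ α ∈ C, ∑ β ∈ Cᶜ, ∑ n ∈ Finset.range (Mk+1-p),
              (x g α)^(p+n) / (x g β)^(n+1))
            + ∑ α ∈ C, ∑ β ∈ Cᶜ, (x g α)^(Mk+1) / ((x g β)^(Mk+1-p) * (x g β - x g α)) :=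
            Finset.sum_add_distrib
        _ = _ := by
            congr 1
            · calc ∑ α ∈ C, ∑ β ∈ Cᶜ, ∑ n ∈ Finset.range (Mk+1-p),
                    (x g α)^(p+n) / (x g β)^(n+1)
                  = ∑ α ∈ C, ∑ β ∈ Cᶜ, ∑ n ∈ Finset.range (Mk+1-p),
                    ((1:ℂ)/(x g β)^(n+1)) * (x g α)^(p+n) :=
                    Finset.sum_congr rfl fun α _ => Finset.sum_congr rfl fun β _ =>
                      Finset.sum_congr rfl fun n _ => by ring
                _ = ∑ n ∈ Finset.range (Mk+1-p),
                    (∑ β ∈ Cᶜ, (1:ℂ)/(x g β)^(n+1)) * ∑ α ∈ C, (x g α)^(p+n) :=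
                    triple_reorder _ _ _ _ _
                _ = _ := Finset.sum_congr rfl fun n _ => by rw [hSx]
            · refine Finset.sum_congr rfl fun α _ => ?_
              rw [Finset.mul_sum]
              exact Finset.sum_congr rfl fun β _ => by ring
    have c5 : ∑ α ∈ C, (4*(g:ℂ)*∑ β ∈ C, (x g α)^p / (x g β - x g α))
        = 4*(g:ℂ)*∑ α ∈ C, ∑ β ∈ C, (x g α)^p / (x g β - x g α) :=
      (Finset.mul_sum _ _ _).symm
    have cPg : ∑ n ∈ Finset.range (Mk+1-p), Pg g n * S g (p+n)
        = (∑ n ∈ Finset.range (Mk+1-p),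
            (∑ j ∈ univ.erase k, (d j : ℂ)/(a j)^(n+1)) * S g (p+n))
          + ∑ n ∈ Finset.range (Mk+1-p),
            (∑ β ∈ Cᶜ, (1:ℂ)/(x g β)^(n+1)) * S g (p+n) := by
      rw [← Finset.sum_add_distrib]
      refine Finset.sum_congr rfl fun n _ => ?_
      simp only [hPgdef]
      rw [add_mul]
    have cR : R g p
        = (∑ α ∈ C, (x g α)^(Mk+1) * ∑ j ∈ univ.erase k,
            (d j : ℂ)/((a j)^(Mk+1-p) * (a j - x g α)))
          + ∑ α ∈ C, (x g α)^(Mk+1) * ∑ β ∈ Cᶜ,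
            (1:ℂ)/((x g β)^(Mk+1-p) * (x g β - x g α)) := by
      simp only [hRdef, hHdef]
      rw [← Finset.sum_add_distrib]
      exact Finset.sum_congr rfl fun α _ => mul_add _ _ _
    have total2 : S g p - 4*(g:ℂ)*(d k:ℂ)*S g (p-1)
        + 4*(g:ℂ)*(∑ n ∈ Finset.range (Mk+1-p), Pg g n * S g (p+n))
        + 4*(g:ℂ)*R g p
        + 4*(g:ℂ)*(∑ α ∈ C, ∑ β ∈ C, (x g α)^p/(x g β - x g α)) = 0 := by
      linear_combination total - c1 + c2 - c3 - c4 - c5 + 4*(g:ℂ)*cPg + 4*(g:ℂ)*cR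
    have hsym : 2*(∑ α ∈ C, ∑ β ∈ C, (x g α)^p/(x g β - x g α))
        = (p:ℂ)*S g (p-1) - ∑ m ∈ Finset.range p, S g m * S g (p-1-m) := by
      have hs := sym_aux C (fun β => x g β) hxinj p hp1
      rw [hs, hSx g (p-1)]
      congr 1
      refine Finset.sum_congr rfl fun m _ => ?_
      rw [hSx g m, hSx g (p-1-m)]
    have hdk : (d k : ℂ) = (1 - (Mk:ℂ))/2 := by
      have h : (d k : ℝ) = (1 - (Mk:ℝ))/2 := by linarith [hcluster]
      have := congrArg (fun t : ℝ => (t:ℂ)) h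
      push_cast at this
      exact this
    rcases eq_or_ne p 1 with hp | hp
    · have hbd1 : ∑ m ∈ Finset.range p, S g m * S g (p-1-m) = (Mk:ℂ)^2 := by
        rw [hp, Finset.sum_range_one]
        norm_num [hS0 g]
        ring
      have hS0' : S g (p-1) = (Mk:ℂ) := by
        rw [show p - 1 = 0 from by omega]
        exact hS0 g
      have hIco : ∑ m ∈ Finset.Ico 1 (p-1), S g m * S g (p-1-m) = 0 := by
        rw [show p - 1 = 0 from by omega]
        simp
      rw [if_pos hp, hIco]
      linear_combination total2 - 2*(g:ℂ)*hsym + 2*(g:ℂ)*hbd1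
        - 4*(g:ℂ)*(Mk:ℂ)*hS0' + 4*(g:ℂ)*S g (p-1)*hdk
    · have hp2 : 2 ≤ p := by omega
      have hbd2 : ∑ m ∈ Finset.range p, S g m * S g (p-1-m)
          = 2*(Mk:ℂ)*S g (p-1) + ∑ m ∈ Finset.Ico 1 (p-1), S g m * S g (p-1-m) := by
        rw [Finset.range_eq_Ico, Finset.sum_eq_sum_Ico_succ_bot (by omega : 0 < p)]
        simp only [zero_add]
        have htop : (∑ m ∈ Finset.Ico 1 (p-1+1), S g m * S g (p-1-m))
            = (∑ m ∈ Finset.Ico 1 (p-1), S g m * S g (p-1-m))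
              + S g (p-1) * S g (p-1-(p-1)) :=
          Finset.sum_Ico_succ_top (a := 1) (b := p-1) (by omega) _
        rw [show p-1+1 = p from by omega] at htop
        rw [htop, show p-1-(p-1) = 0 from by omega, show p-1-0 = p-1 from by omega,
          hS0 g]
        ring
      rw [if_neg hp]
      linear_combination total2 - 2*(g:ℂ)*hsym + 2*(g:ℂ)*hbd2 + 4*(g:ℂ)*S g (p-1)*hdk

  have main : ∀ p : ℕ, 1 ≤ p → p ≤ Mk →
      χ p - (if 2 ≤ p then 2*(gc:ℂ)*((Mk:ℂ)+1-(p:ℂ))*χ (p-1) else 0)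
        + ∑ n ∈ Finset.range (Mk+1-p), 4*(gc:ℂ)*Pstar n * χ (p+n) = 0 := by
    intro p hp1 hpMk
    set f : ℝ → ℂ := fun g =>
      S g p / S g 1
        - (if 2 ≤ p then 2*(g:ℂ)*((Mk:ℂ)+1-(p:ℂ)) * (S g (p-1)/S g 1) else 0)
        - 2*(g:ℂ)*∑ m ∈ Finset.Ico 1 (p-1), (S g m / S g 1) * S g (p-1-m)
        + ∑ n ∈ Finset.range (Mk+1-p), 4*(g:ℂ)*Pg g n * (S g (p+n) / S g 1)
        + 4*(g:ℂ)*(R g p / S g 1) with hfdef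
    have hf0 : ∀ᶠ g in 𝓝[≠] gc, f g = 0 := by
      filter_upwards [hgood] with g hg
      obtain ⟨hg1, hg2⟩ := hg
      have hk := key g hg1 hg2 p hp1 hpMk
      have e1 : ∑ m ∈ Finset.Ico 1 (p-1), (S g m / S g 1) * S g (p-1-m)
          = (∑ m ∈ Finset.Ico 1 (p-1), S g m * S g (p-1-m)) / S g 1 := by
        rw [Finset.sum_div]
        exact Finset.sum_congr rfl fun m _ => div_mul_eq_mul_div _ _ _
      have e2 : ∑ n ∈ Finset.range (Mk+1-p), 4*(g:ℂ)*Pg g n * (S g (p+n) / S g 1)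
          = 4*(g:ℂ)*((∑ n ∈ Finset.range (Mk+1-p), Pg g n * S g (p+n)) / S g 1) := by
        rw [Finset.sum_div, Finset.mul_sum]
        exact Finset.sum_congr rfl fun n _ => by ring
      rcases eq_or_ne p 1 with hp | hp
      · subst hp
        simp only [hfdef]
        rw [if_neg (by omega), e1, e2]
        simp only [show (1:ℕ) - 1 = 0 from rfl, show Finset.Ico 1 0 = ∅ from rfl,
          Finset.sum_empty, mul_zero, sub_zero, if_pos rfl, hS0 g, Nat.add_sub_cancel] at hk ⊢
        push_cast at hk
        linear_combination (S g 1)⁻¹ * hk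
      · have hp2 : 2 ≤ p := by omega
        rw [if_neg hp] at hk
        simp only [hfdef]
        rw [if_pos hp2, e1, e2]
        linear_combination (S g 1)⁻¹ * hk
    have T1 := hχ p hp1 hpMk
    have T2 : Tendsto (fun g : ℝ =>
        (if 2 ≤ p then 2*(g:ℂ)*((Mk:ℂ)+1-(p:ℂ)) * (S g (p-1)/S g 1) else 0)) (𝓝[≠] gc)
        (𝓝 (if 2 ≤ p then 2*(gc:ℂ)*((Mk:ℂ)+1-(p:ℂ))*χ (p-1) else 0)) := by
      by_cases h2 : 2 ≤ p
      · simp only [if_pos h2]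
        exact ((hglim.const_mul (2:ℂ)).mul_const ((Mk:ℂ)+1-(p:ℂ))).mul
          (hχ (p-1) (by omega) (by omega))
      · simp only [if_neg h2]
        exact tendsto_const_nhds
    have T3 : Tendsto (fun g : ℝ =>
        2*(g:ℂ)*∑ m ∈ Finset.Ico 1 (p-1), (S g m / S g 1) * S g (p-1-m)) (𝓝[≠] gc)
        (𝓝 0) := by
      have hsum : Tendsto (fun g : ℝ =>
          ∑ m ∈ Finset.Ico 1 (p-1), (S g m / S g 1) * S g (p-1-m)) (𝓝[≠] gc)
          (𝓝 (∑ m ∈ Finset.Ico 1 (p-1), χ m * 0)) := by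
        refine tendsto_finset_sum _ fun m hm => ?_
        have hm' := Finset.mem_Ico.mp hm
        exact (hχ m hm'.1 (by omega)).mul (hSlim0 (p-1-m) (by omega))
      have := (hglim.const_mul (2:ℂ)).mul hsum
      simpa using this
    have T4 : Tendsto (fun g : ℝ =>
        ∑ n ∈ Finset.range (Mk+1-p), 4*(g:ℂ)*Pg g n * (S g (p+n) / S g 1)) (𝓝[≠] gc)
        (𝓝 (∑ n ∈ Finset.range (Mk+1-p), 4*(gc:ℂ)*Pstar n * χ (p+n))) := by
      refine tendsto_finset_sum _ fun n hn => ?_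
      have hn' := Finset.mem_range.mp hn
      exact ((hglim.const_mul (4:ℂ)).mul (hPglim n)).mul (hχ (p+n) (by omega) (by omega))
    have T5 : Tendsto (fun g : ℝ => 4*(g:ℂ)*(R g p / S g 1)) (𝓝[≠] gc) (𝓝 0) := by
      have := (hglim.const_mul (4:ℂ)).mul (hRlim p)
      simpa using this
    have Tf : Tendsto f (𝓝[≠] gc)
        (𝓝 (χ p - (if 2 ≤ p then 2*(gc:ℂ)*((Mk:ℂ)+1-(p:ℂ))*χ (p-1) else 0) - 0
          + (∑ n ∈ Finset.range (Mk+1-p), 4*(gc:ℂ)*Pstar n * χ (p+n)) + 0)) := by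
      rw [hfdef]
      exact (((T1.sub T2).sub T3).add T4).add T5
    have h00 : Tendsto f (𝓝[≠] gc) (𝓝 0) :=
      (tendsto_congr' hf0).mpr tendsto_const_nhds
    have huniq := tendsto_nhds_unique Tf h00
    linear_combination huniq
  refine ⟨?_, ?_⟩
  · funext i
    have hrow := row_aux Mk (i:ℕ) i.isLt gc Pstar χ
    have hmain := main ((i:ℕ)+1) (by omega) (by have := i.isLt; omega)
    have hc1 : Mk + 1 - ((i:ℕ)+1) = Mk - (i:ℕ) := by omega
    have hc2 : (i:ℕ) + 1 - 1 = (i:ℕ) := rfl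
    rw [hc1, hc2] at hmain
    show (Matrix.of _).mulVec _ i = (0 : Fin Mk → ℂ) i
    simp only [Matrix.mulVec, dotProduct, Matrix.of_apply, Pi.zero_apply]
    rw [Fin.sum_univ_eq_sum_range (fun j =>
      (if j = (i:ℕ) then (1:ℂ) + 4*gc*Pstar 0
       else if j+1 = (i:ℕ) then -2*gc*((Mk:ℂ) - ((i:ℕ):ℂ))
       else if (i:ℕ) < j then 4*gc*Pstar (j-(i:ℕ)) else 0) * χ (j+1)) Mk]
    rw [hrow]
    exact hmain
  · intro hcon
    have h0 := congrFun hcon ⟨0, hMk1⟩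
    simp only [Pi.zero_apply] at h0
    norm_num [hχ1] at h0
end
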